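/- arXiv:1910.12576 — 2 statements merged into one kernel-verified Lean document; each statement's English description precedes it below -/
import Mathlib

section
/- Let k and β be positive integers. Let W be the set of continuous (4kβ)-symplectic Gelfand–Tsetlin patterns λ⁽¹⁾ ≺ ⋯ ≺ λ⁽⁴ᵏᵝ⁾ with top row λ⁽⁴ᵏᵝ⁾ = ⟨1^{2kβ}⟩ that satisfy, for every i = 1,…,k (with λ⁽⁰⁾ ≡ 0): Σ_{j=(2i−2)β+1}^{(2i−1)β} [ Σ_{l=1}^{j} λ⁽²ʲ⁾_l − 2 Σ_{l=1}^{j} λ⁽²ʲ⁻¹⁾_l + Σ_{l=1}^{j−1} λ⁽²ʲ⁻²⁾_l ] = Σ_{j=(2i−1)β+1}^{2iβ} [ Σ_{l=1}^{j} λ⁽²ʲ⁾_l − 2 Σ_{l=1}^{j} λ⁽²ʲ⁻¹⁾_l + Σ_{l=1}^{j−1} λ⁽²ʲ⁻²⁾_l ], each pattern being identified with the vector of all entries of its rows 1,…,4kβ−1, a point of ℝ^{4k²β²}. Then W has positive (kβ(2kβ+1)−k)-dimensional Hausdorff measure. -/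
noncomputable section
open MeasureTheory

/-- `rowLen r = ⌈r/2⌉`, the length of row `r` of a half Gelfand–Tsetlin pattern. -/
def rowLen (r : ℕ) : ℕ := (r + 1) / 2

/-- Index type for the entries of rows `1,…,m` of a half Gelfand–Tsetlin pattern:
the row `r = i+1` (for `i : Fin m`) has `⌈r/2⌉ = (i+2)/2` entries. -/
abbrev GTIdx (m : ℕ) := Σ i : Fin m, Fin ((i.1 + 2) / 2)

/-- The `(r,l)` entry (1-based) encoded by a point `f : GTIdx m → ℝ`, and `0` out of range. -/
def gtEnt {m : ℕ} (f : GTIdx m → ℝ) (r l : ℕ) : ℝ :=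
  if h : 1 ≤ r ∧ r ≤ m ∧ 1 ≤ l ∧ l ≤ (r + 1) / 2 then
    f ⟨⟨r - 1, by omega⟩, ⟨l - 1, show l - 1 < (r - 1 + 2) / 2 by omega⟩⟩
  else 0

/-- The entries of a continuous `(4kβ)`-symplectic Gelfand–Tsetlin pattern whose rows
`1,…,4kβ−1` are encoded by `f` and whose top row `4kβ` is fixed to be `⟨1^{2kβ}⟩`. -/
def spEnt (k β : ℕ) (f : GTIdx (4*k*β-1) → ℝ) (r l : ℕ) : ℝ :=
  if r = 4*k*β then (if 1 ≤ l ∧ l ≤ 2*k*β then 1 else 0) else gtEnt f r l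

/-- The summand `Σ_{l=1}^{j} λ^{(2j)}_l − 2 Σ_{l=1}^{j} λ^{(2j−1)}_l + Σ_{l=1}^{j−1} λ^{(2j−2)}_l`
of the symplectic constraints, for an entry function `e` (row `0` is identically `0`, in
accordance with the convention `λ^{(0)} ≡ 0`). -/
def spRowTermR (e : ℕ → ℕ → ℝ) (j : ℕ) : ℝ :=
  (∑ l ∈ Finset.Icc 1 j, e (2*j) l) - 2 * (∑ l ∈ Finset.Icc 1 j, e (2*j-1) l)
    + (∑ l ∈ Finset.Icc 1 (j-1), e (2*j-2) l)

/-- The set of continuous `(4kβ)`-symplectic Gelfand–Tsetlin patterns (nonnegative entries,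
non-increasing rows, interlacing consecutive rows) with top row `⟨1^{2kβ}⟩` satisfying the
`k` symplectic constraints, identified with the vectors of the entries of rows `1,…,4kβ−1`
(a subset of `ℝ^{4k²β²}`). -/
def SpContPatterns (k β : ℕ) : Set (GTIdx (4*k*β-1) → ℝ) :=
  {f | (∀ r l, 1 ≤ r → r ≤ 4*k*β → 1 ≤ l → l ≤ rowLen r → 0 ≤ spEnt k β f r l) ∧
       (∀ r l, 1 ≤ r → r ≤ 4*k*β → 1 ≤ l → l + 1 ≤ rowLen r →
         spEnt k β f r (l+1) ≤ spEnt k β f r l) ∧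
       (∀ r l, 1 ≤ r → r + 1 ≤ 4*k*β → 1 ≤ l → l ≤ rowLen r →
         spEnt k β f r l ≤ spEnt k β f (r+1) l) ∧
       (∀ r l, 1 ≤ r → r + 1 ≤ 4*k*β → 1 ≤ l → l ≤ rowLen r → l + 1 ≤ rowLen (r+1) →
         spEnt k β f (r+1) (l+1) ≤ spEnt k β f r l) ∧
       (∀ i, 1 ≤ i → i ≤ k →
         ∑ j ∈ Finset.Icc ((2*i-2)*β+1) ((2*i-1)*β), spRowTermR (spEnt k β f) j
           = ∑ j ∈ Finset.Icc ((2*i-1)*β+1) (2*i*β), spRowTermR (spEnt k β f) j)}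

namespace SpAux

def cc (k β : ℕ) : ℝ := 1 / (8*k*β)

lemma cc_pos (k β : ℕ) (hk : 0 < k) (hβ : 0 < β) : 0 < cc k β := by
  have : (0:ℝ) < 8*k*β := by positivity
  simp [cc]; positivity

def basePt (k β : ℕ) : GTIdx (4*k*β-1) → ℝ := fun x =>
  if x.1.1 < 2*k*β + x.2.1 then
    1 - cc k β * (2*(x.2.1:ℝ) + 2*(k:ℝ)*(β:ℝ) - (x.1.1:ℝ) + 1)
  else 1

lemma spEnt_basePt (k β : ℕ) (hk : 0 < k) (hβ : 0 < β) (r l : ℕ)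
    (hr1 : 1 ≤ r) (hr2 : r ≤ 4*k*β) (hl1 : 1 ≤ l) (hl2 : l ≤ rowLen r) :
    spEnt k β (basePt k β) r l =
      if r < 2*k*β + l then 1 - cc k β * (2*(l:ℝ) + 2*(k:ℝ)*(β:ℝ) - (r:ℝ)) else 1 := by
  have hkβ : 1 ≤ k*β := Nat.one_le_iff_ne_zero.2 (by positivity)
  have h4 : 4*k*β = 4*(k*β) := by ring
  have h2 : 2*k*β = 2*(k*β) := by ring
  have hl2' : l ≤ (r+1)/2 := hl2
  unfold spEnt
  by_cases htop : r = 4*k*β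
  · subst htop
    rw [if_pos rfl, if_pos ⟨hl1, by omega⟩, if_neg (by omega)]
  · have hrm : r ≤ 4*k*β - 1 := by omega
    rw [if_neg htop]
    unfold gtEnt
    rw [dif_pos ⟨hr1, hrm, hl1, hl2'⟩]
    unfold basePt
    simp only
    have hc1 : ((l - 1 : ℕ) : ℝ) = (l:ℝ) - 1 := by push_cast [Nat.cast_sub hl1]; ring
    have hc2 : ((r - 1 : ℕ) : ℝ) = (r:ℝ) - 1 := by push_cast [Nat.cast_sub hr1]; ring
    by_cases hfree : r < 2*k*β + l
    · rw [if_pos (by omega), if_pos (by omega), hc1, hc2]; ring_nf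
    · rw [if_neg (by omega), if_neg (by omega)]

lemma gauss (m : ℕ) : ∑ l ∈ Finset.Icc 1 m, (l:ℝ) = m*(m+1)/2 := by
  induction m with
  | zero => simp
  | succ q ih =>
    rw [Finset.sum_Icc_succ_top (by omega), ih]
    push_cast; ring

lemma split_sum (b L : ℕ) (hb : b ≤ L) (f : ℕ → ℝ) :
    ∑ l ∈ Finset.Icc 1 L, f l = (∑ l ∈ Finset.Ioc 0 b, f l) + ∑ l ∈ Finset.Ioc b L, f l := by
  rw [show Finset.Icc 1 L = Finset.Ioc 0 L from Finset.Icc_add_one_left_eq_Ioc 0 L]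
  exact (Finset.sum_Ioc_consecutive _ (Nat.zero_le b) hb).symm

lemma gauss_Ioc (b L : ℕ) (hb : b ≤ L) :
    ∑ l ∈ Finset.Ioc b L, (l:ℝ) = L*(L+1)/2 - b*(b+1)/2 := by
  have := split_sum b L hb (fun l => (l:ℝ))
  rw [show Finset.Ioc 0 b = Finset.Icc 1 b from (Finset.Icc_add_one_left_eq_Ioc 0 b).symm] at this
  rw [gauss] at this
  linarith [gauss b, this]


/-- master row sum formula -/
lemma rowSum_basePt (k β : ℕ) (hk : 0 < k) (hβ : 0 < β) (r : ℕ) (hr : r ≤ 4*k*β) :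
    ∑ l ∈ Finset.Icc 1 (rowLen r), spEnt k β (basePt k β) r l
      = (rowLen r : ℝ) - cc k β * ((rowLen r : ℝ) - ((r - 2*k*β : ℕ):ℝ)) *
          ((rowLen r:ℝ) + ((r - 2*k*β : ℕ):ℝ) + 1 + 2*(k:ℝ)*(β:ℝ) - (r:ℝ)) := by

  have hkβ : 1 ≤ k*β := Nat.one_le_iff_ne_zero.2 (by positivity)
  have h4 : 4*k*β = 4*(k*β) := by ring
  have h2 : 2*k*β = 2*(k*β) := by ring
  set L := rowLen r with hL
  set b := r - 2*k*β with hb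
  have hLdef : L = (r+1)/2 := rfl
  have hbL : b ≤ L := by omega
  rw [split_sum b L hbL]
  have hforced : ∀ l ∈ Finset.Ioc 0 b, spEnt k β (basePt k β) r l = 1 := by
    intro l hl
    simp only [Finset.mem_Ioc] at hl
    rw [spEnt_basePt k β hk hβ r l (by omega) hr hl.1 (le_trans hl.2 hbL)]
    rw [if_neg (by omega)]
  have hfree : ∀ l ∈ Finset.Ioc b L, spEnt k β (basePt k β) r l
      = 1 - cc k β * (2*(l:ℝ) + 2*(k:ℝ)*(β:ℝ) - (r:ℝ)) := by
    intro l hl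
    simp only [Finset.mem_Ioc] at hl
    rw [spEnt_basePt k β hk hβ r l (by omega) hr (by omega) hl.2]
    rw [if_pos (by omega)]
  rw [Finset.sum_congr rfl hforced, Finset.sum_congr rfl hfree]
  have e1 : ∑ l ∈ Finset.Ioc 0 b, (1:ℝ) = b := by simp
  have h5 : ∑ x ∈ Finset.Ioc b L, (2*(x:ℝ) + (2*(k:ℝ)*(β:ℝ) - (r:ℝ)))
      = 2*((L:ℝ)*(L+1)/2 - (b:ℝ)*(b+1)/2) + ((L:ℝ) - (b:ℝ))*(2*(k:ℝ)*(β:ℝ) - (r:ℝ)) := by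
    rw [Finset.sum_add_distrib, ← Finset.mul_sum, gauss_Ioc b L hbL, Finset.sum_const,
      Nat.card_Ioc, nsmul_eq_mul, Nat.cast_sub hbL]
  have e2 : ∑ x ∈ Finset.Ioc b L, (1 - cc k β * (2*(x:ℝ) + 2*(k:ℝ)*(β:ℝ) - (r:ℝ)))
      = ((L:ℝ) - (b:ℝ)) - cc k β * (2*((L:ℝ)*(L+1)/2 - (b:ℝ)*(b+1)/2)
          + ((L:ℝ) - (b:ℝ))*(2*(k:ℝ)*(β:ℝ) - (r:ℝ))) := by
    rw [Finset.sum_sub_distrib, Finset.sum_const, Nat.card_Ioc, ← Finset.mul_sum]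
    rw [show (∑ x ∈ Finset.Ioc b L, (2*(x:ℝ) + 2*(k:ℝ)*(β:ℝ) - (r:ℝ)))
        = ∑ x ∈ Finset.Ioc b L, (2*(x:ℝ) + (2*(k:ℝ)*(β:ℝ) - (r:ℝ))) from by
      apply Finset.sum_congr rfl; intro x _; ring]
    rw [h5, nsmul_eq_mul, Nat.cast_sub hbL]
    ring
  rw [e1, e2]
  ring


lemma term_basePt (k β : ℕ) (hk : 0 < k) (hβ : 0 < β) (j : ℕ) (hj1 : 1 ≤ j) (hj2 : j ≤ 2*k*β) :
    spRowTermR (spEnt k β (basePt k β)) j = -1 + cc k β * (2*(k:ℝ)*(β:ℝ) + 2) := by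
  have hkβ : 1 ≤ k*β := Nat.one_le_iff_ne_zero.2 (by positivity)
  have h4 : 4*k*β = 4*(k*β) := by ring
  have h2 : 2*k*β = 2*(k*β) := by ring
  have hr2j : rowLen (2*j) = j := by unfold rowLen; omega
  have hr2j1 : rowLen (2*j-1) = j := by unfold rowLen; omega
  have hr2j2 : rowLen (2*j-2) = j-1 := by unfold rowLen; omega
  have S2 := rowSum_basePt k β hk hβ (2*j) (by omega)
  have S1 := rowSum_basePt k β hk hβ (2*j-1) (by omega)
  have S0 := rowSum_basePt k β hk hβ (2*j-2) (by omega)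
  rw [hr2j] at S2; rw [hr2j1] at S1; rw [hr2j2] at S0
  unfold spRowTermR
  rw [S2, S1, S0]
  have c1 : ((2*j - 1 : ℕ):ℝ) = 2*(j:ℝ) - 1 := by
    have h : (1:ℕ) ≤ 2*j := by omega
    push_cast [Nat.cast_sub h]; ring
  have c2 : ((2*j - 2 : ℕ):ℝ) = 2*(j:ℝ) - 2 := by
    have h : (2:ℕ) ≤ 2*j := by omega
    push_cast [Nat.cast_sub h]; ring
  have c3 : ((j - 1 : ℕ):ℝ) = (j:ℝ) - 1 := by
    push_cast [Nat.cast_sub hj1]; ring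
  rw [c1, c2, c3]
  rcases le_or_gt (2*j) (2*k*β) with hc | hc
  · have z2 : 2*j - 2*k*β = 0 := by omega
    have z1 : 2*j - 1 - 2*k*β = 0 := by omega
    have z0 : 2*j - 2 - 2*k*β = 0 := by omega
    rw [z2, z1, z0]
    push_cast
    ring
  · have hge : 2*k*β ≤ 2*j - 2 := by omega
    have z2 : ((2*j - 2*k*β : ℕ):ℝ) = 2*(j:ℝ) - 2*(k:ℝ)*(β:ℝ) := by
      have h : 2*k*β ≤ 2*j := by omega
      push_cast [Nat.cast_sub h]; ring
    have z1 : ((2*j - 1 - 2*k*β : ℕ):ℝ) = 2*(j:ℝ) - 1 - 2*(k:ℝ)*(β:ℝ) := by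
      have h : 2*k*β ≤ 2*j - 1 := by omega
      have h' : (1:ℕ) ≤ 2*j := by omega
      push_cast [Nat.cast_sub h, Nat.cast_sub h']; ring
    have z0 : ((2*j - 2 - 2*k*β : ℕ):ℝ) = 2*(j:ℝ) - 2 - 2*(k:ℝ)*(β:ℝ) := by
      have h' : (2:ℕ) ≤ 2*j := by omega
      push_cast [Nat.cast_sub hge, Nat.cast_sub h']; ring
    rw [z2, z1, z0]
    push_cast
    ring

def consFn (k β : ℕ) (f : GTIdx (4*k*β-1) → ℝ) (i : ℕ) : ℝ :=
  (∑ j ∈ Finset.Icc ((2*i-2)*β+1) ((2*i-1)*β), spRowTermR (spEnt k β f) j)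
  - ∑ j ∈ Finset.Icc ((2*i-1)*β+1) (2*i*β), spRowTermR (spEnt k β f) j

lemma gtEnt_add {m : ℕ} (f g : GTIdx m → ℝ) (r l : ℕ) :
    gtEnt (fun x => f x + g x) r l = gtEnt f r l + gtEnt g r l := by
  unfold gtEnt; split <;> simp

lemma gtEnt_top (k β : ℕ) (hk : 0 < k) (hβ : 0 < β) (g : GTIdx (4*k*β-1) → ℝ) (l : ℕ) :
    gtEnt g (4*k*β) l = 0 := by
  have hkβ : 1 ≤ k*β := Nat.one_le_iff_ne_zero.2 (by positivity)
  have h4 : 4*k*β = 4*(k*β) := by ring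
  unfold gtEnt
  rw [dif_neg (by omega)]

lemma spEnt_addRight (k β : ℕ) (hk : 0 < k) (hβ : 0 < β) (f g : GTIdx (4*k*β-1) → ℝ) (r l : ℕ) :
    spEnt k β (fun x => f x + g x) r l = spEnt k β f r l + gtEnt g r l := by
  unfold spEnt
  split
  · next h => rw [h, gtEnt_top k β hk hβ]; ring
  · exact gtEnt_add f g r l

lemma spEnt_addRight_fun (k β : ℕ) (hk : 0 < k) (hβ : 0 < β) (f g : GTIdx (4*k*β-1) → ℝ) :
    spEnt k β (fun x => f x + g x) = fun r l => spEnt k β f r l + gtEnt g r l := by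
  funext r l; exact spEnt_addRight k β hk hβ f g r l

lemma spRowTermR_add (e1 e2 : ℕ → ℕ → ℝ) (j : ℕ) :
    spRowTermR (fun r l => e1 r l + e2 r l) j = spRowTermR e1 j + spRowTermR e2 j := by
  unfold spRowTermR
  rw [Finset.sum_add_distrib, Finset.sum_add_distrib, Finset.sum_add_distrib]
  ring

lemma spRowTermR_sum {ι : Type*} (s : Finset ι) (e : ι → ℕ → ℕ → ℝ) (j : ℕ) :
    spRowTermR (fun r l => ∑ i ∈ s, e i r l) j = ∑ i ∈ s, spRowTermR (e i) j := by
  unfold spRowTermR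
  rw [show (∑ l ∈ Finset.Icc 1 j, ∑ i ∈ s, e i (2*j) l)
      = ∑ i ∈ s, ∑ l ∈ Finset.Icc 1 j, e i (2*j) l from Finset.sum_comm,
    show (∑ l ∈ Finset.Icc 1 j, ∑ i ∈ s, e i (2*j-1) l)
      = ∑ i ∈ s, ∑ l ∈ Finset.Icc 1 j, e i (2*j-1) l from Finset.sum_comm,
    show (∑ l ∈ Finset.Icc 1 (j-1), ∑ i ∈ s, e i (2*j-2) l)
      = ∑ i ∈ s, ∑ l ∈ Finset.Icc 1 (j-1), e i (2*j-2) l from Finset.sum_comm,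
    Finset.mul_sum, ← Finset.sum_sub_distrib, ← Finset.sum_add_distrib]

lemma abs_spRowTermR_le (e : ℕ → ℕ → ℝ) (j : ℕ) (η : ℝ) (hη : 0 ≤ η)
    (he : ∀ r l, |e r l| ≤ η) : |spRowTermR e j| ≤ 4*j*η := by
  have key : ∀ (a b : ℕ) (hab : a ≤ b+1) (r : ℕ), |∑ l ∈ Finset.Icc a b, e r l| ≤ (b+1-a : ℕ) * η := by
    intro a b hab r
    calc |∑ l ∈ Finset.Icc a b, e r l| ≤ ∑ l ∈ Finset.Icc a b, |e r l| :=
          Finset.abs_sum_le_sum_abs _ _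
      _ ≤ ∑ _l ∈ Finset.Icc a b, η := Finset.sum_le_sum (fun l _ => he r l)
      _ = (b+1-a : ℕ) * η := by rw [Finset.sum_const, Nat.card_Icc, nsmul_eq_mul]
  have b1 := key 1 j (by omega) (2*j)
  have b2 := key 1 j (by omega) (2*j-1)
  have b3 := key 1 (j-1) (by omega) (2*j-2)
  have hcj : ((j+1-1 : ℕ) : ℝ) = j := by push_cast; ring
  have hcj' : ((j-1+1-1 : ℕ) : ℝ) ≤ (j:ℝ) := by
    have : (j-1+1-1 : ℕ) ≤ j := by omega
    exact_mod_cast this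
  rw [hcj] at b1 b2
  unfold spRowTermR
  have habs : |(∑ l ∈ Finset.Icc 1 j, e (2*j) l) - 2 * (∑ l ∈ Finset.Icc 1 j, e (2*j-1) l)
      + (∑ l ∈ Finset.Icc 1 (j-1), e (2*j-2) l)|
      ≤ |∑ l ∈ Finset.Icc 1 j, e (2*j) l| + 2*|∑ l ∈ Finset.Icc 1 j, e (2*j-1) l|
        + |∑ l ∈ Finset.Icc 1 (j-1), e (2*j-2) l| := by
    have h1 := abs_add_le ((∑ l ∈ Finset.Icc 1 j, e (2*j) l) - 2 * (∑ l ∈ Finset.Icc 1 j, e (2*j-1) l))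
      (∑ l ∈ Finset.Icc 1 (j-1), e (2*j-2) l)
    have h2 := abs_sub (∑ l ∈ Finset.Icc 1 j, e (2*j) l) (2 * (∑ l ∈ Finset.Icc 1 j, e (2*j-1) l))
    have h3 : |2 * (∑ l ∈ Finset.Icc 1 j, e (2*j-1) l)| = 2 * |∑ l ∈ Finset.Icc 1 j, e (2*j-1) l| := by
      rw [abs_mul]; simp
    linarith
  have hb3 : |∑ l ∈ Finset.Icc 1 (j-1), e (2*j-2) l| ≤ (j:ℝ) * η := by
    calc |∑ l ∈ Finset.Icc 1 (j-1), e (2*j-2) l| ≤ ((j-1+1-1 : ℕ):ℝ) * η := b3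
      _ ≤ (j:ℝ) * η := by apply mul_le_mul_of_nonneg_right hcj' hη
  calc |(∑ l ∈ Finset.Icc 1 j, e (2*j) l) - 2 * (∑ l ∈ Finset.Icc 1 j, e (2*j-1) l)
      + (∑ l ∈ Finset.Icc 1 (j-1), e (2*j-2) l)| ≤ _ := habs
    _ ≤ (j:ℝ)*η + 2*((j:ℝ)*η) + (j:ℝ)*η := by linarith
    _ = 4*j*η := by ring

lemma gtEnt_abs_le {m : ℕ} (w : GTIdx m → ℝ) (η : ℝ) (hη : 0 ≤ η)
    (hw : ∀ x, |w x| ≤ η) (r l : ℕ) : |gtEnt w r l| ≤ η := by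
  unfold gtEnt; split
  · apply hw
  · simpa using hη


lemma gtIdx_eq_iff {m : ℕ} (x y : GTIdx m) : x = y ↔ (x.1.1 = y.1.1 ∧ x.2.1 = y.2.1) := by
  constructor
  · rintro rfl; exact ⟨rfl, rfl⟩
  · obtain ⟨⟨x1, hx1⟩, ⟨x2, hx2⟩⟩ := x
    obtain ⟨⟨y1, hy1⟩, ⟨y2, hy2⟩⟩ := y
    rintro ⟨h1, h2⟩
    simp only at h1 h2
    subst h1; subst h2
    rfl

def distIdx (k β : ℕ) (hk : 0 < k) (hβ : 0 < β) (i : Fin k) : GTIdx (4*k*β-1) :=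
  ⟨⟨2*((2*i.1+1)*β)-2, by
      have h1 : (2*i.1+1)*β ≤ (2*k-1)*β := Nat.mul_le_mul_right β (by omega)
      have h2 := Nat.sub_mul (2*k) 1 β
      have h3 : 1 ≤ (2*i.1+1)*β := Nat.one_le_iff_ne_zero.2 (by positivity)
      have h4 : β ≤ 2*k*β := by
        calc β = 1*β := (one_mul β).symm
          _ ≤ (2*k)*β := Nat.mul_le_mul_right β (by omega)
      have h5 : 4*k*β = 2*(2*k*β) := by ring
      omega⟩,
   ⟨(2*i.1+1)*β-1, by
      show (2*i.1+1)*β-1 < (2*((2*i.1+1)*β)-2+2)/2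
      have h3 : 1 ≤ (2*i.1+1)*β := Nat.one_le_iff_ne_zero.2 (by positivity)
      omega⟩⟩

lemma gtEnt_single (k β : ℕ) (hk : 0 < k) (hβ : 0 < β) (i : Fin k) (σ : ℝ) (r l : ℕ) :
    gtEnt (fun y => if y = distIdx k β hk hβ i then σ else 0) r l
      = if r = 2*((2*i.1+1)*β)-1 ∧ l = (2*i.1+1)*β then σ else 0 := by
  set J := (2*i.1+1)*β with hJdef
  have hJ1 : 1 ≤ J := Nat.one_le_iff_ne_zero.2 (by positivity)
  have h1 : J ≤ (2*k-1)*β := Nat.mul_le_mul_right β (by omega)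
  have h2 := Nat.sub_mul (2*k) 1 β
  have h4 : β ≤ 2*k*β := by
    calc β = 1*β := (one_mul β).symm
      _ ≤ (2*k)*β := Nat.mul_le_mul_right β (by omega)
  have h5 : 4*k*β = 2*(2*k*β) := by ring
  unfold gtEnt
  split
  · next h =>
    by_cases hx : r = 2*J-1 ∧ l = J
    · dsimp only
      rw [if_pos hx, if_pos]
      rw [gtIdx_eq_iff]
      unfold distIdx
      simp only
      omega
    · dsimp only
      rw [if_neg hx, if_neg]
      rw [gtIdx_eq_iff]
      unfold distIdx
      simp only
      omega
  · next h =>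
    rw [if_neg]
    rintro ⟨rfl, rfl⟩
    apply h
    refine ⟨by omega, by omega, by omega, by omega⟩

lemma spRowTermR_single (J : ℕ) (hJ : 1 ≤ J) (σ : ℝ) (j : ℕ) (hj : 1 ≤ j) :
    spRowTermR (fun r l => if r = 2*J-1 ∧ l = J then σ else 0) j
      = if j = J then -2*σ else 0 := by
  unfold spRowTermR
  have s1 : ∑ l ∈ Finset.Icc 1 j, (if 2*j = 2*J-1 ∧ l = J then σ else 0) = 0 :=
    Finset.sum_eq_zero (fun l _ => by rw [if_neg]; rintro ⟨h, -⟩; omega)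
  have s3 : ∑ l ∈ Finset.Icc 1 (j-1), (if 2*j-2 = 2*J-1 ∧ l = J then σ else 0) = 0 :=
    Finset.sum_eq_zero (fun l _ => by rw [if_neg]; rintro ⟨h, -⟩; omega)
  by_cases hjJ : j = J
  · subst hjJ
    have s2 : ∑ l ∈ Finset.Icc 1 j, (if 2*j-1 = 2*j-1 ∧ l = j then σ else 0) = σ := by
      have : ∀ l, ((2*j-1 = 2*j-1 ∧ l = j) ↔ l = j) := by intro l; simp
      rw [Finset.sum_congr rfl (fun l _ => by rw [if_congr (this l) rfl rfl])]
      rw [Finset.sum_ite_eq' (Finset.Icc 1 j) j (fun _ => σ)]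
      rw [if_pos (by simp [Finset.mem_Icc]; omega)]
    rw [s1, s2, s3, if_pos rfl]
    ring
  · have s2 : ∑ l ∈ Finset.Icc 1 j, (if 2*j-1 = 2*J-1 ∧ l = J then σ else 0) = 0 :=
      Finset.sum_eq_zero (fun l _ => by rw [if_neg]; rintro ⟨h, -⟩; omega)
    rw [s1, s2, s3, if_neg hjJ]
    ring

lemma consFn_single (k β : ℕ) (hk : 0 < k) (hβ : 0 < β) (i : Fin k) (σ : ℝ) (i' : ℕ)
    (hi'1 : 1 ≤ i') (hi'2 : i' ≤ k) :
    (∑ j ∈ Finset.Icc ((2*i'-2)*β+1) ((2*i'-1)*β),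
        spRowTermR (fun r l => if r = 2*((2*i.1+1)*β)-1 ∧ l = (2*i.1+1)*β then σ else 0) j)
    - (∑ j ∈ Finset.Icc ((2*i'-1)*β+1) (2*i'*β),
        spRowTermR (fun r l => if r = 2*((2*i.1+1)*β)-1 ∧ l = (2*i.1+1)*β then σ else 0) j)
      = if i' = i.1+1 then -2*σ else 0 := by
  set J := (2*i.1+1)*β with hJdef
  have hJ1 : 1 ≤ J := Nat.one_le_iff_ne_zero.2 (by positivity)
  have e1 : ∀ j ∈ Finset.Icc ((2*i'-2)*β+1) ((2*i'-1)*β),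
      spRowTermR (fun r l => if r = 2*J-1 ∧ l = J then σ else 0) j
        = if j = J then -2*σ else 0 := by
    intro j hj
    simp only [Finset.mem_Icc] at hj
    exact spRowTermR_single J hJ1 σ j (by omega)
  have e2 : ∀ j ∈ Finset.Icc ((2*i'-1)*β+1) (2*i'*β),
      spRowTermR (fun r l => if r = 2*J-1 ∧ l = J then σ else 0) j
        = if j = J then -2*σ else 0 := by
    intro j hj
    simp only [Finset.mem_Icc] at hj
    exact spRowTermR_single J hJ1 σ j (by omega)
  rw [Finset.sum_congr rfl e1, Finset.sum_congr rfl e2,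
    Finset.sum_ite_eq' _ J (fun _ => -2*σ), Finset.sum_ite_eq' _ J (fun _ => -2*σ)]
  have hmem2 : J ∉ Finset.Icc ((2*i'-1)*β+1) (2*i'*β) := by
    rw [Finset.mem_Icc]
    rintro ⟨ha, hb⟩
    have hlt : (2*i'-1)*β < (2*i.1+1)*β := by omega
    have l1 : 2*i'-1 < 2*i.1+1 := lt_of_mul_lt_mul_right hlt (Nat.zero_le β)
    have l2 : 2*i.1+1 ≤ 2*i' := Nat.le_of_mul_le_mul_right hb hβ
    omega
  rw [if_neg hmem2]
  by_cases hii : i' = i.1+1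
  · rw [if_pos, if_pos hii]
    · ring
    · rw [Finset.mem_Icc]
      constructor
      · have : (2*i'-2)*β < (2*i.1+1)*β := by
          apply Nat.mul_lt_mul_of_lt_of_le (by omega) (le_refl β) hβ
        omega
      · exact Nat.mul_le_mul_right β (show 2*i.1+1 ≤ 2*i'-1 by omega)
  · rw [if_neg, if_neg hii]
    · ring
    · rw [Finset.mem_Icc]
      rintro ⟨ha, hb⟩
      have hlt : (2*i'-2)*β < (2*i.1+1)*β := by omega
      have l1 : 2*i'-2 < 2*i.1+1 := lt_of_mul_lt_mul_right hlt (Nat.zero_le β)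
      have l2 : 2*i.1+1 ≤ 2*i'-1 := Nat.le_of_mul_le_mul_right hb hβ
      omega


lemma sumA : ∀ N : ℕ, ∑ i ∈ Finset.range (2*N+1), (i+2)/2 = (N+1)*(N+1) := by
  intro N
  induction N with
  | zero => simp
  | succ q ih =>
    have h : 2*(q+1)+1 = (2*q+1) + 1 + 1 := by ring
    rw [h, Finset.sum_range_succ, Finset.sum_range_succ, ih]
    have e1 : ((2*q+1)+2)/2 = q+1 := by omega
    have e2 : ((2*q+1+1)+2)/2 = q+2 := by omega
    rw [e1, e2]
    ring

lemma sumB (a : ℕ) : ∀ M : ℕ, 2 * (∑ i ∈ Finset.range M, (i+1-a)) = (M-a)*(M-a+1) := by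
  intro M
  induction M with
  | zero => simp
  | succ q ih =>
    rw [Finset.sum_range_succ, Nat.mul_add, ih]
    rcases le_or_gt (q+1) a with h | h
    · have e1 : q+1-a = 0 := by omega
      have e2 : q-a = 0 := by omega
      simp [e1, e2]
    · have e2 : q+1-a = (q-a)+1 := by omega
      rw [e2]
      ring

lemma card_free_sum (n : ℕ) (hn : 1 ≤ n) :
    2 * (∑ i ∈ Finset.range (2*n-1), ((i+2)/2 - (i+1-n))) = n*(n+1) := by
  set T := ∑ i ∈ Finset.range (2*n-1), ((i+2)/2 - (i+1-n)) with hT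
  set B := ∑ i ∈ Finset.range (2*n-1), (i+1-n) with hB
  have hTB : T + B = ∑ i ∈ Finset.range (2*n-1), (i+2)/2 := by
    rw [hT, hB, ← Finset.sum_add_distrib]
    apply Finset.sum_congr rfl
    intro i hi
    simp only [Finset.mem_range] at hi
    omega
  have hA : ∑ i ∈ Finset.range (2*n-1), (i+2)/2 = n*n := by
    have h : 2*n-1 = 2*(n-1)+1 := by omega
    rw [h, sumA]
    have : n-1+1 = n := by omega
    rw [this]
  have hBval : 2*B = (n-1)*n := by
    rw [hB, sumB]
    have e1 : 2*n-1-n = n-1 := by omega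
    rw [e1]
    have e2 : n-1+1 = n := by omega
    rw [e2]
  have key1 : (n-1)*n + n = n*n := by
    cases n with
    | zero => omega
    | succ q => simp [Nat.succ_sub_one]; ring
  have key2 : n*(n+1) = n*n + n := by ring
  omega

/-- subtype of sigma commutes with sigma of subtypes -/
def sigmaSubtypeEquiv {m : ℕ} (P : (i : Fin m) → Fin ((i.1+2)/2) → Prop) :
    {x : GTIdx m // P x.1 x.2} ≃ Σ i : Fin m, {j : Fin ((i.1+2)/2) // P i j} where
  toFun x := ⟨x.1.1, ⟨x.1.2, x.2⟩⟩
  invFun y := ⟨⟨y.1, y.2.1⟩, y.2.2⟩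
  left_inv := by rintro ⟨⟨i,j⟩,h⟩; rfl
  right_inv := by rintro ⟨i,⟨j,h⟩⟩; rfl

def finGeEquiv (M a : ℕ) : {j : Fin M // a ≤ j.1} ≃ Fin (M - a) where
  toFun j := ⟨j.1.1 - a, by have := j.1.2; have := j.2; omega⟩
  invFun j := ⟨⟨j.1 + a, by have := j.2; omega⟩, Nat.le_add_left a j.1⟩
  left_inv := by
    rintro ⟨⟨j, hj⟩, h⟩
    have h' : a ≤ j := h
    apply Subtype.ext; apply Fin.ext
    show j - a + a = j
    omega
  right_inv := by
    rintro ⟨j, hj⟩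
    apply Fin.ext
    simp

def FreeIdx (k β : ℕ) (x : GTIdx (4*k*β-1)) : Prop := x.1.1 < 2*k*β + x.2.1

instance (k β : ℕ) : DecidablePred (FreeIdx k β) := fun x => by unfold FreeIdx; infer_instance

lemma card_freeIdx (k β : ℕ) (hk : 0 < k) (hβ : 0 < β) :
    Fintype.card {x : GTIdx (4*k*β-1) // FreeIdx k β x} = k*β*(2*k*β+1) := by
  have hkβ : 1 ≤ k*β := Nat.one_le_iff_ne_zero.2 (by positivity)
  have step1 : Fintype.card {x : GTIdx (4*k*β-1) // FreeIdx k β x}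
      = ∑ i : Fin (4*k*β-1), ((i.1+2)/2 - (i.1+1 - 2*k*β)) := by
    rw [show Fintype.card {x : GTIdx (4*k*β-1) // FreeIdx k β x}
        = Fintype.card (Σ i : Fin (4*k*β-1), {j : Fin ((i.1+2)/2) // i.1 < 2*k*β + j.1}) from
      Fintype.card_congr (sigmaSubtypeEquiv (fun i j => i.1 < 2*k*β + j.1))]
    rw [Fintype.card_sigma]
    apply Finset.sum_congr rfl
    intro i _
    rw [Fintype.card_congr ((Equiv.subtypeEquivRight (fun j => by
        constructor <;> intro h <;> omega)).trans (finGeEquiv ((i.1+2)/2) (i.1+1-2*k*β)))]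
    rw [Fintype.card_fin]
  rw [step1, Fin.sum_univ_eq_sum_range (fun i => ((i+2)/2 - (i+1 - 2*k*β)))]
  have h2 : 2*k*β = 2*(k*β) := by ring
  have h4 : 4*k*β = 4*(k*β) := by ring
  have hm : 4*k*β-1 = 2*(2*k*β)-1 := by omega
  rw [hm]
  have := card_free_sum (2*k*β) (by omega)
  have hr : (2*k*β)*(2*k*β+1) = 2*(k*β*(2*k*β+1)) := by ring
  omega


/-- sum of the `t`-perturbations -/
def pertBase (k β : ℕ) {d : ℕ} (emb : Fin d → GTIdx (4*k*β-1)) (t : Fin d → ℝ) :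
    GTIdx (4*k*β-1) → ℝ := fun x => ∑ j, if emb j = x then t j else 0

def uPt (k β : ℕ) {d : ℕ} (emb : Fin d → GTIdx (4*k*β-1)) (t : Fin d → ℝ) :
    GTIdx (4*k*β-1) → ℝ := fun x => basePt k β x + pertBase k β emb t x

def sigmaV (k β : ℕ) {d : ℕ} (emb : Fin d → GTIdx (4*k*β-1)) (t : Fin d → ℝ) (i : ℕ) : ℝ :=
  consFn k β (uPt k β emb t) i / 2

def corrPt (k β : ℕ) (hk : 0 < k) (hβ : 0 < β) {d : ℕ} (emb : Fin d → GTIdx (4*k*β-1))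
    (t : Fin d → ℝ) : GTIdx (4*k*β-1) → ℝ :=
  fun x => ∑ i : Fin k, if x = distIdx k β hk hβ i then sigmaV k β emb t (i.1+1) else 0

def fullPt (k β : ℕ) (hk : 0 < k) (hβ : 0 < β) {d : ℕ} (emb : Fin d → GTIdx (4*k*β-1))
    (t : Fin d → ℝ) : GTIdx (4*k*β-1) → ℝ :=
  fun x => uPt k β emb t x + corrPt k β hk hβ emb t x

lemma pertBase_abs_le (k β : ℕ) {d : ℕ} (emb : Fin d → GTIdx (4*k*β-1))
    (hemb : Function.Injective emb) (t : Fin d → ℝ) (η : ℝ) (hη : 0 ≤ η)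
    (ht : ∀ j, |t j| ≤ η) (x : GTIdx (4*k*β-1)) : |pertBase k β emb t x| ≤ η := by
  unfold pertBase
  by_cases hx : ∃ j, emb j = x
  · obtain ⟨j₀, hj₀⟩ := hx
    rw [Finset.sum_eq_single_of_mem j₀ (Finset.mem_univ j₀)
      (fun b _ hb => if_neg (fun he => hb (hemb (he.trans hj₀.symm))))]
    rw [if_pos hj₀]
    exact ht j₀
  · rw [Finset.sum_eq_zero (fun j _ => if_neg (fun he => hx ⟨j, he⟩))]
    simpa using hη

lemma pertBase_eq_zero (k β : ℕ) {d : ℕ} (emb : Fin d → GTIdx (4*k*β-1)) (t : Fin d → ℝ)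
    (x : GTIdx (4*k*β-1)) (hx : ∀ j, emb j ≠ x) : pertBase k β emb t x = 0 :=
  Finset.sum_eq_zero (fun j _ => if_neg (hx j))

lemma pertBase_at_emb (k β : ℕ) {d : ℕ} (emb : Fin d → GTIdx (4*k*β-1))
    (hemb : Function.Injective emb) (t : Fin d → ℝ) (j₀ : Fin d) :
    pertBase k β emb t (emb j₀) = t j₀ := by
  unfold pertBase
  rw [Finset.sum_eq_single_of_mem j₀ (Finset.mem_univ j₀)
    (fun b _ hb => if_neg (fun he => hb (hemb he)))]
  rw [if_pos rfl]

/-- the base point satisfies the symplectic constraints -/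
lemma consFn_basePt (k β : ℕ) (hk : 0 < k) (hβ : 0 < β) (i' : ℕ) (h1 : 1 ≤ i') (h2 : i' ≤ k) :
    consFn k β (basePt k β) i' = 0 := by
  unfold consFn
  have hβ2k : (2*i'-1)*β ≤ 2*k*β := Nat.mul_le_mul_right β (by omega)
  have hβ2k' : 2*i'*β ≤ 2*k*β := Nat.mul_le_mul_right β (by omega)
  have hsplit1 : (2*i'-1)*β = (2*i'-2)*β + β := by
    have h : 2*i'-1 = (2*i'-2)+1 := by omega
    rw [h, Nat.succ_mul]
  have hsplit2 : 2*i'*β = (2*i'-1)*β + β := by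
    have h : 2*i' = (2*i'-1)+1 := by omega
    nth_rewrite 1 [h]
    rw [Nat.succ_mul]
  have e1 : ∀ j ∈ Finset.Icc ((2*i'-2)*β+1) ((2*i'-1)*β),
      spRowTermR (spEnt k β (basePt k β)) j = -1 + cc k β * (2*(k:ℝ)*(β:ℝ) + 2) := by
    intro j hj
    simp only [Finset.mem_Icc] at hj
    exact term_basePt k β hk hβ j (by omega) (by omega)
  have e2 : ∀ j ∈ Finset.Icc ((2*i'-1)*β+1) (2*i'*β),
      spRowTermR (spEnt k β (basePt k β)) j = -1 + cc k β * (2*(k:ℝ)*(β:ℝ) + 2) := by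
    intro j hj
    simp only [Finset.mem_Icc] at hj
    exact term_basePt k β hk hβ j (by omega) (by omega)
  rw [Finset.sum_congr rfl e1, Finset.sum_congr rfl e2, Finset.sum_const, Finset.sum_const,
    Nat.card_Icc, Nat.card_Icc]
  have c1 : (2*i'-1)*β + 1 - ((2*i'-2)*β+1) = β := by omega
  have c2 : 2*i'*β + 1 - ((2*i'-1)*β+1) = β := by omega
  rw [c1, c2]
  ring

lemma consFn_addRight (k β : ℕ) (hk : 0 < k) (hβ : 0 < β) (f g : GTIdx (4*k*β-1) → ℝ) (i' : ℕ) :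
    consFn k β (fun x => f x + g x) i' = consFn k β f i'
      + ((∑ j ∈ Finset.Icc ((2*i'-2)*β+1) ((2*i'-1)*β), spRowTermR (gtEnt g) j)
        - ∑ j ∈ Finset.Icc ((2*i'-1)*β+1) (2*i'*β), spRowTermR (gtEnt g) j) := by
  unfold consFn
  rw [spEnt_addRight_fun k β hk hβ f g]
  have e : ∀ j : ℕ, spRowTermR (fun r l => spEnt k β f r l + gtEnt g r l) j
      = spRowTermR (spEnt k β f) j + spRowTermR (gtEnt g) j :=
    fun j => spRowTermR_add _ _ j
  rw [Finset.sum_congr rfl (fun j _ => e j), Finset.sum_congr rfl (fun j _ => e j),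
    Finset.sum_add_distrib, Finset.sum_add_distrib]
  ring

lemma consPert_bound (k β : ℕ) (hk : 0 < k) (hβ : 0 < β) (g : GTIdx (4*k*β-1) → ℝ) (η : ℝ)
    (hη : 0 ≤ η) (hg : ∀ x, |g x| ≤ η) (i' : ℕ) (h1 : 1 ≤ i') (h2 : i' ≤ k) :
    |(∑ j ∈ Finset.Icc ((2*i'-2)*β+1) ((2*i'-1)*β), spRowTermR (gtEnt g) j)
        - ∑ j ∈ Finset.Icc ((2*i'-1)*β+1) (2*i'*β), spRowTermR (gtEnt g) j|
      ≤ 16*(k:ℝ)*(β:ℝ)*(β:ℝ)*η := by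
  have hβ2k : (2*i'-1)*β ≤ 2*k*β := Nat.mul_le_mul_right β (by omega)
  have hβ2k' : 2*i'*β ≤ 2*k*β := Nat.mul_le_mul_right β (by omega)
  have hsplit1 : (2*i'-1)*β = (2*i'-2)*β + β := by
    have h : 2*i'-1 = (2*i'-2)+1 := by omega
    rw [h, Nat.succ_mul]
  have hsplit2 : 2*i'*β = (2*i'-1)*β + β := by
    have h : 2*i' = (2*i'-1)+1 := by omega
    nth_rewrite 1 [h]
    rw [Nat.succ_mul]
  have key : ∀ (a b : ℕ), b ≤ 2*k*β → b + 1 - a = β →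
      |∑ j ∈ Finset.Icc a b, spRowTermR (gtEnt g) j| ≤ (β:ℝ) * (8*(k:ℝ)*(β:ℝ)*η) := by
    intro a b hb hcard
    calc |∑ j ∈ Finset.Icc a b, spRowTermR (gtEnt g) j|
        ≤ ∑ j ∈ Finset.Icc a b, |spRowTermR (gtEnt g) j| := Finset.abs_sum_le_sum_abs _ _
      _ ≤ ∑ _j ∈ Finset.Icc a b, (8*(k:ℝ)*(β:ℝ)*η) := by
          apply Finset.sum_le_sum
          intro j hj
          simp only [Finset.mem_Icc] at hj
          calc |spRowTermR (gtEnt g) j| ≤ 4*(j:ℝ)*η :=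
                abs_spRowTermR_le _ j η hη (gtEnt_abs_le g η hη hg)
            _ ≤ 8*(k:ℝ)*(β:ℝ)*η := by
                have hjb : (j:ℝ) ≤ 2*(k:ℝ)*(β:ℝ) := by
                  have : j ≤ 2*k*β := le_trans hj.2 hb
                  exact_mod_cast this
                nlinarith
      _ = (β:ℝ) * (8*(k:ℝ)*(β:ℝ)*η) := by
          rw [Finset.sum_const, Nat.card_Icc, hcard, nsmul_eq_mul]
  have bA := key ((2*i'-2)*β+1) ((2*i'-1)*β) hβ2k (by omega)
  have bB := key ((2*i'-1)*β+1) (2*i'*β) hβ2k' (by omega)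
  have habs := abs_sub (∑ j ∈ Finset.Icc ((2*i'-2)*β+1) ((2*i'-1)*β), spRowTermR (gtEnt g) j)
    (∑ j ∈ Finset.Icc ((2*i'-1)*β+1) (2*i'*β), spRowTermR (gtEnt g) j)
  have hr : (β:ℝ)*(8*(k:ℝ)*(β:ℝ)*η) + (β:ℝ)*(8*(k:ℝ)*(β:ℝ)*η) = 16*(k:ℝ)*(β:ℝ)*(β:ℝ)*η := by
    ring
  linarith


/-- the value of `σ` is small -/
lemma sigmaV_abs_le (k β : ℕ) (hk : 0 < k) (hβ : 0 < β) {d : ℕ}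
    (emb : Fin d → GTIdx (4*k*β-1)) (hemb : Function.Injective emb) (t : Fin d → ℝ)
    (η : ℝ) (hη : 0 ≤ η) (ht : ∀ j, |t j| ≤ η) (i' : ℕ) (h1 : 1 ≤ i') (h2 : i' ≤ k) :
    |sigmaV k β emb t i'| ≤ 8*(k:ℝ)*(β:ℝ)*(β:ℝ)*η := by
  unfold sigmaV uPt
  rw [consFn_addRight k β hk hβ _ _ i', consFn_basePt k β hk hβ i' h1 h2, zero_add]
  have := consPert_bound k β hk hβ (pertBase k β emb t) η hη
    (pertBase_abs_le k β emb hemb t η hη ht) i' h1 h2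
  rw [abs_div]
  have h2' : |(2:ℝ)| = 2 := by norm_num
  rw [h2']
  linarith

lemma corrPt_abs_le (k β : ℕ) (hk : 0 < k) (hβ : 0 < β) {d : ℕ}
    (emb : Fin d → GTIdx (4*k*β-1)) (hemb : Function.Injective emb) (t : Fin d → ℝ)
    (η : ℝ) (hη : 0 ≤ η) (ht : ∀ j, |t j| ≤ η) (x : GTIdx (4*k*β-1)) :
    |corrPt k β hk hβ emb t x| ≤ 8*(k:ℝ)*(k:ℝ)*(β:ℝ)*(β:ℝ)*η := by
  unfold corrPt
  calc |∑ i : Fin k, if x = distIdx k β hk hβ i then sigmaV k β emb t (i.1+1) else 0|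
      ≤ ∑ i : Fin k, |if x = distIdx k β hk hβ i then sigmaV k β emb t (i.1+1) else 0| :=
        Finset.abs_sum_le_sum_abs _ _
    _ ≤ ∑ _i : Fin k, 8*(k:ℝ)*(β:ℝ)*(β:ℝ)*η := by
        apply Finset.sum_le_sum
        intro i _
        split
        · exact sigmaV_abs_le k β hk hβ emb hemb t η hη ht (i.1+1) (by omega) (by omega)
        · simp only [abs_zero]; positivity
    _ = (k:ℝ) * (8*(k:ℝ)*(β:ℝ)*(β:ℝ)*η) := by
        rw [Finset.sum_const, Finset.card_univ, Fintype.card_fin, nsmul_eq_mul]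
    _ = 8*(k:ℝ)*(k:ℝ)*(β:ℝ)*(β:ℝ)*η := by ring

/-- the chosen perturbation size -/
def etaV (k β : ℕ) : ℝ := cc k β / (4 * (1 + 8*(k:ℝ)*(k:ℝ)*(β:ℝ)*(β:ℝ)))

lemma etaV_pos (k β : ℕ) (hk : 0 < k) (hβ : 0 < β) : 0 < etaV k β := by
  unfold etaV
  have := cc_pos k β hk hβ
  positivity

lemma fullPt_close (k β : ℕ) (hk : 0 < k) (hβ : 0 < β) {d : ℕ}
    (emb : Fin d → GTIdx (4*k*β-1)) (hemb : Function.Injective emb) (t : Fin d → ℝ)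
    (ht : ∀ j, |t j| ≤ etaV k β) (x : GTIdx (4*k*β-1)) :
    |fullPt k β hk hβ emb t x - basePt k β x| ≤ cc k β / 4 := by
  have hη : 0 ≤ etaV k β := le_of_lt (etaV_pos k β hk hβ)
  have h1 := pertBase_abs_le k β emb hemb t (etaV k β) hη ht x
  have h2 := corrPt_abs_le k β hk hβ emb hemb t (etaV k β) hη ht x
  unfold fullPt uPt
  have key : basePt k β x + pertBase k β emb t x + corrPt k β hk hβ emb t x - basePt k β x
      = pertBase k β emb t x + corrPt k β hk hβ emb t x := by ring
  rw [key]
  have htri := abs_add_le (pertBase k β emb t x) (corrPt k β hk hβ emb t x)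
  have heta : etaV k β + 8*(k:ℝ)*(k:ℝ)*(β:ℝ)*(β:ℝ)*etaV k β = cc k β / 4 := by
    unfold etaV
    have hpos : (0:ℝ) < 4 * (1 + 8*(k:ℝ)*(k:ℝ)*(β:ℝ)*(β:ℝ)) := by positivity
    field_simp
  linarith

/-- entries of `fullPt` at forced positions equal 1. -/
lemma fullPt_forced (k β : ℕ) (hk : 0 < k) (hβ : 0 < β) {d : ℕ}
    (emb : Fin d → GTIdx (4*k*β-1)) (hembF : ∀ j, FreeIdx k β (emb j)) (t : Fin d → ℝ)
    (x : GTIdx (4*k*β-1)) (hx : ¬ FreeIdx k β x) : fullPt k β hk hβ emb t x = basePt k β x := by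
  unfold fullPt uPt
  rw [pertBase_eq_zero k β emb t x (fun j he => hx (he ▸ hembF j))]
  have hcorr : corrPt k β hk hβ emb t x = 0 := by
    apply Finset.sum_eq_zero
    intro i _
    apply if_neg
    intro he
    apply hx
    rw [he]
    show FreeIdx k β (distIdx k β hk hβ i)
    unfold FreeIdx distIdx
    simp only
    have h1 : (2*i.1+1)*β ≤ (2*k-1)*β := Nat.mul_le_mul_right β (by omega)
    have h2 := Nat.sub_mul (2*k) 1 β
    have h3 : 1 ≤ (2*i.1+1)*β := Nat.one_le_iff_ne_zero.2 (by positivity)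
    have h4 : β ≤ 2*k*β := by
      calc β = 1*β := (one_mul β).symm
        _ ≤ (2*k)*β := Nat.mul_le_mul_right β (by omega)
    omega
  rw [hcorr]
  ring

lemma gtEnt_sum {m : ℕ} {ι : Type*} (s : Finset ι) (g : ι → GTIdx m → ℝ) (r l : ℕ) :
    gtEnt (fun y => ∑ i ∈ s, g i y) r l = ∑ i ∈ s, gtEnt (g i) r l := by
  unfold gtEnt
  by_cases h : 1 ≤ r ∧ r ≤ m ∧ 1 ≤ l ∧ l ≤ (r+1)/2
  · simp only [dif_pos h]
  · simp only [dif_neg h, Finset.sum_const_zero]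

lemma gtEnt_zero_on_forced (k β : ℕ) (w : GTIdx (4*k*β-1) → ℝ)
    (hw : ∀ x, ¬ FreeIdx k β x → w x = 0) (r l : ℕ) (hl : 1 ≤ l)
    (hforced : ¬ (r < 2*k*β + l)) : gtEnt w r l = 0 := by
  unfold gtEnt
  split
  · next h =>
    apply hw
    unfold FreeIdx
    simp only
    omega
  · rfl

lemma wdiff_zero_on_forced (k β : ℕ) (hk : 0 < k) (hβ : 0 < β) {d : ℕ}
    (emb : Fin d → GTIdx (4*k*β-1)) (hembF : ∀ j, FreeIdx k β (emb j)) (t : Fin d → ℝ)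
    (x : GTIdx (4*k*β-1)) (hx : ¬ FreeIdx k β x) :
    pertBase k β emb t x = 0 ∧ corrPt k β hk hβ emb t x = 0 := by
  constructor
  · exact pertBase_eq_zero k β emb t x (fun j he => hx (he ▸ hembF j))
  · apply Finset.sum_eq_zero
    intro i _
    apply if_neg
    intro he
    apply hx
    rw [he]
    show FreeIdx k β (distIdx k β hk hβ i)
    unfold FreeIdx distIdx
    simp only
    have h1 : (2*i.1+1)*β ≤ (2*k-1)*β := Nat.mul_le_mul_right β (by omega)
    have h2 := Nat.sub_mul (2*k) 1 β
    have h3 : 1 ≤ (2*i.1+1)*β := Nat.one_le_iff_ne_zero.2 (by positivity)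
    have h4 : β ≤ 2*k*β := by
      calc β = 1*β := (one_mul β).symm
        _ ≤ (2*k)*β := Nat.mul_le_mul_right β (by omega)
    omega

lemma spEnt_fullPt_split (k β : ℕ) (hk : 0 < k) (hβ : 0 < β) {d : ℕ}
    (emb : Fin d → GTIdx (4*k*β-1)) (t : Fin d → ℝ) (r l : ℕ) :
    spEnt k β (fullPt k β hk hβ emb t) r l
      = spEnt k β (basePt k β) r l + (gtEnt (pertBase k β emb t) r l
          + gtEnt (corrPt k β hk hβ emb t) r l) := by
  rw [show fullPt k β hk hβ emb t
      = (fun x => uPt k β emb t x + corrPt k β hk hβ emb t x) from rfl]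
  rw [spEnt_addRight k β hk hβ _ _ r l]
  rw [show uPt k β emb t = (fun x => basePt k β x + pertBase k β emb t x) from rfl]
  rw [spEnt_addRight k β hk hβ _ _ r l]
  ring

lemma cc_prop (k β : ℕ) (hk : 0 < k) (hβ : 0 < β) :
    0 < cc k β ∧ cc k β * (2*(k:ℝ)*(β:ℝ)+1) ≤ 1/2 ∧ cc k β ≤ 1/8 := by
  have hK : (1:ℝ) ≤ (k:ℝ)*(β:ℝ) := by
    have : (1:ℕ) ≤ k*β := Nat.one_le_iff_ne_zero.2 (by positivity)
    exact_mod_cast this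
  have hc0 : 0 < cc k β := cc_pos k β hk hβ
  have hcc : cc k β * (8*(k:ℝ)*(β:ℝ)) = 1 := by
    unfold cc
    field_simp
  refine ⟨hc0, ?_, ?_⟩
  · nlinarith [mul_nonneg (le_of_lt hc0) (by linarith : (0:ℝ) ≤ 2*(k:ℝ)*(β:ℝ)-1)]
  · nlinarith

/-- the main membership lemma -/
lemma fullPt_mem (k β : ℕ) (hk : 0 < k) (hβ : 0 < β) {d : ℕ}
    (emb : Fin d → GTIdx (4*k*β-1)) (hembF : ∀ j, FreeIdx k β (emb j))
    (hembND : ∀ (j : Fin d) (i : Fin k), emb j ≠ distIdx k β hk hβ i)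
    (hembInj : Function.Injective emb) (t : Fin d → ℝ) (ht : ∀ j, |t j| ≤ etaV k β) :
    fullPt k β hk hβ emb t ∈ SpContPatterns k β := by
  have hη : 0 ≤ etaV k β := le_of_lt (etaV_pos k β hk hβ)
  obtain ⟨hc0, hchalf, hc8⟩ := cc_prop k β hk hβ
  set c := cc k β with hcdef
  set F := fullPt k β hk hβ emb t with hFdef
  set Kr := (k:ℝ)*(β:ℝ) with hKr
  -- uniform bound on the perturbation part
  have hwb : ∀ r l, |gtEnt (pertBase k β emb t) r l + gtEnt (corrPt k β hk hβ emb t) r l|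
      ≤ c/4 := by
    intro r l
    have b1 := gtEnt_abs_le (pertBase k β emb t) (etaV k β) hη
      (pertBase_abs_le k β emb hembInj t (etaV k β) hη ht) r l
    have b2 := gtEnt_abs_le (corrPt k β hk hβ emb t) (8*(k:ℝ)*(k:ℝ)*(β:ℝ)*(β:ℝ)*etaV k β)
      (by positivity) (corrPt_abs_le k β hk hβ emb hembInj t (etaV k β) hη ht) r l
    have htri := abs_add_le (gtEnt (pertBase k β emb t) r l) (gtEnt (corrPt k β hk hβ emb t) r l)
    have heta : etaV k β + 8*(k:ℝ)*(k:ℝ)*(β:ℝ)*(β:ℝ)*etaV k β = c/4 := by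
      rw [hcdef]
      unfold etaV
      have hpos : (0:ℝ) < 4 * (1 + 8*(k:ℝ)*(k:ℝ)*(β:ℝ)*(β:ℝ)) := by positivity
      field_simp
    linarith
  -- forced entries are 1
  have HF : ∀ r l, 1 ≤ r → r ≤ 4*k*β → 1 ≤ l → l ≤ rowLen r → ¬(r < 2*k*β + l) →
      spEnt k β F r l = 1 := by
    intro r l hr1 hr2 hl1 hl2 hfo
    rw [hFdef, spEnt_fullPt_split k β hk hβ emb t r l,
      spEnt_basePt k β hk hβ r l hr1 hr2 hl1 hl2, if_neg hfo]
    have z1 : gtEnt (pertBase k β emb t) r l = 0 :=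
      gtEnt_zero_on_forced k β _ (fun x hx =>
        (wdiff_zero_on_forced k β hk hβ emb hembF t x hx).1) r l hl1 hfo
    have z2 : gtEnt (corrPt k β hk hβ emb t) r l = 0 :=
      gtEnt_zero_on_forced k β _ (fun x hx =>
        (wdiff_zero_on_forced k β hk hβ emb hembF t x hx).2) r l hl1 hfo
    rw [z1, z2]
    ring
  -- free entries are close to the base point entries
  have HB : ∀ r l, 1 ≤ r → r ≤ 4*k*β → 1 ≤ l → l ≤ rowLen r → (r < 2*k*β + l) →
      |spEnt k β F r l - (1 - c * (2*(l:ℝ) + 2*Kr - (r:ℝ)))| ≤ c/4 := by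
    intro r l hr1 hr2 hl1 hl2 hfr
    rw [hFdef, spEnt_fullPt_split k β hk hβ emb t r l,
      spEnt_basePt k β hk hβ r l hr1 hr2 hl1 hl2, if_pos hfr]
    have := hwb r l
    rw [hKr]
    have heq : 1 - c * (2*(l:ℝ) + 2*((k:ℝ)*(β:ℝ)) - (r:ℝ))
        = 1 - c * (2*(l:ℝ) + 2*(k:ℝ)*(β:ℝ) - (r:ℝ)) := by ring
    rw [heq]
    rw [← hcdef]
    simpa using this
  -- bounds on the linear coefficient at free positions
  have hA2 : ∀ r l : ℕ, 1 ≤ l → r < 2*k*β + l → (2:ℝ) ≤ 2*(l:ℝ) + 2*Kr - (r:ℝ) := by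
    intro r l hl1 hfr
    have hn : r + 1 ≤ 2*k*β + l := by omega
    have hcast : (r:ℝ) + 1 ≤ 2*(k:ℝ)*(β:ℝ) + (l:ℝ) := by exact_mod_cast hn
    have hl : (1:ℝ) ≤ (l:ℝ) := by exact_mod_cast hl1
    rw [hKr]; linarith
  have hAup : ∀ r l : ℕ, l ≤ rowLen r → 2*(l:ℝ) + 2*Kr - (r:ℝ) ≤ 2*Kr + 1 := by
    intro r l hl2
    have hn : 2*l ≤ r + 1 := by
      have : l ≤ (r+1)/2 := hl2
      omega
    have hcast : 2*(l:ℝ) ≤ (r:ℝ) + 1 := by exact_mod_cast hn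
    linarith
  have hch2 : c*(2*Kr+1) ≤ 1/2 := by
    have he : c*(2*Kr+1) = c*(2*(k:ℝ)*(β:ℝ)+1) := by rw [hKr]; ring
    rw [he]; exact hchalf
  refine ⟨?_, ?_, ?_, ?_, ?_⟩
  -- (1) nonnegativity
  · intro r l hr1 hr2 hl1 hl2
    by_cases hfr : r < 2*k*β + l
    · have hb := HB r l hr1 hr2 hl1 hl2 hfr
      rw [abs_le] at hb
      have h2 := mul_le_mul_of_nonneg_left (hAup r l hl2) (le_of_lt hc0)
      linarith
    · rw [HF r l hr1 hr2 hl1 hl2 hfr]; norm_num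
  -- (2) rows non-increasing
  · intro r l hr1 hr2 hl1 hl2
    have hl2' : l ≤ rowLen r := by omega
    by_cases hfr : r < 2*k*β + l
    · have hfr' : r < 2*k*β + (l+1) := by omega
      have hb1 := HB r l hr1 hr2 hl1 hl2' hfr
      have hb2 := HB r (l+1) hr1 hr2 (by omega) hl2 hfr'
      rw [show (1 - c * (2*((l+1:ℕ):ℝ) + 2*Kr - (r:ℝ)))
        = (1 - c * (2*(l:ℝ) + 2*Kr - (r:ℝ))) - 2*c from by push_cast; ring] at hb2
      rw [abs_le] at hb1 hb2
      linarith
    · by_cases hfr2 : r < 2*k*β + (l+1)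
      · have hb2 := HB r (l+1) hr1 hr2 (by omega) hl2 hfr2
        rw [abs_le] at hb2
        have hA := mul_le_mul_of_nonneg_left (hA2 r (l+1) (by omega) hfr2) (le_of_lt hc0)
        rw [HF r l hr1 hr2 hl1 hl2' hfr]
        linarith
      · rw [HF r l hr1 hr2 hl1 hl2' hfr, HF r (l+1) hr1 hr2 (by omega) hl2 hfr2]
  -- (3) going up one row increases
  · intro r l hr1 hr2 hl1 hl2
    have hl2' : l ≤ rowLen (r+1) := by
      unfold rowLen at *
      omega
    by_cases hfr : r < 2*k*β + l
    · have hb1 := HB r l hr1 (by omega) hl1 hl2 hfr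
      rw [abs_le] at hb1
      by_cases hfr' : r + 1 < 2*k*β + l
      · have hb2 := HB (r+1) l (by omega) hr2 hl1 hl2' hfr'
        rw [show (1 - c * (2*(l:ℝ) + 2*Kr - ((r+1:ℕ):ℝ)))
          = (1 - c * (2*(l:ℝ) + 2*Kr - (r:ℝ))) + c from by push_cast; ring] at hb2
        rw [abs_le] at hb2
        linarith
      · rw [HF (r+1) l (by omega) hr2 hl1 hl2' hfr']
        have hA := mul_le_mul_of_nonneg_left (hA2 r l hl1 hfr) (le_of_lt hc0)
        linarith
    · have hfr2 : ¬ (r + 1 < 2*k*β + l) := by omega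
      rw [HF r l hr1 (by omega) hl1 hl2 hfr, HF (r+1) l (by omega) hr2 hl1 hl2' hfr2]
  -- (4) diagonal decrease
  · intro r l hr1 hr2 hl1 hl2 hl3
    by_cases hfr : r < 2*k*β + l
    · have hfr' : r + 1 < 2*k*β + (l+1) := by omega
      have hb1 := HB r l hr1 (by omega) hl1 hl2 hfr
      have hb2 := HB (r+1) (l+1) (by omega) hr2 (by omega) hl3 hfr'
      rw [show (1 - c * (2*((l+1:ℕ):ℝ) + 2*Kr - ((r+1:ℕ):ℝ)))
        = (1 - c * (2*(l:ℝ) + 2*Kr - (r:ℝ))) - c from by push_cast; ring] at hb2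
      rw [abs_le] at hb1 hb2
      linarith
    · rw [HF r l hr1 (by omega) hl1 hl2 hfr]
      by_cases hfr2 : r + 1 < 2*k*β + (l+1)
      · have hb2 := HB (r+1) (l+1) (by omega) hr2 (by omega) hl3 hfr2
        rw [abs_le] at hb2
        have hA := mul_le_mul_of_nonneg_left (hA2 (r+1) (l+1) (by omega) hfr2) (le_of_lt hc0)
        linarith
      · rw [HF (r+1) (l+1) (by omega) hr2 (by omega) hl3 hfr2]
  -- (5) the symplectic constraints
  · intro i' h1 h2
    have hzero : consFn k β F i' = 0 := by
      rw [hFdef]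
      rw [show fullPt k β hk hβ emb t
          = (fun x => uPt k β emb t x + corrPt k β hk hβ emb t x) from rfl]
      rw [consFn_addRight k β hk hβ _ _ i']
      have hcorrfun : ∀ j : ℕ, spRowTermR (gtEnt (corrPt k β hk hβ emb t)) j
          = ∑ i : Fin k, spRowTermR
              (fun r l => if r = 2*((2*i.1+1)*β)-1 ∧ l = (2*i.1+1)*β
                then sigmaV k β emb t (i.1+1) else 0) j := by
        intro j
        have h1' : gtEnt (corrPt k β hk hβ emb t)
            = fun r l => ∑ i : Fin k, gtEnt
                (fun y => if y = distIdx k β hk hβ i then sigmaV k β emb t (i.1+1) else 0) r l := by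
          funext r l
          show gtEnt (corrPt k β hk hβ emb t) r l = _
          rw [show corrPt k β hk hβ emb t = (fun y => ∑ i : Fin k,
              (fun y' => if y' = distIdx k β hk hβ i then sigmaV k β emb t (i.1+1) else 0) y)
            from rfl]
          rw [gtEnt_sum]
        rw [h1', spRowTermR_sum]
        apply Finset.sum_congr rfl
        intro i _
        congr 1
        funext r l
        rw [gtEnt_single]
      rw [Finset.sum_congr rfl (fun j _ => hcorrfun j),
        Finset.sum_congr rfl (fun j _ => hcorrfun j)]
      rw [Finset.sum_comm, Finset.sum_comm (s := Finset.Icc ((2*i'-1)*β+1) (2*i'*β))]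
      rw [← Finset.sum_sub_distrib]
      have hsum : ∑ i : Fin k,
          ((∑ j ∈ Finset.Icc ((2*i'-2)*β+1) ((2*i'-1)*β), spRowTermR
              (fun r l => if r = 2*((2*i.1+1)*β)-1 ∧ l = (2*i.1+1)*β
                then sigmaV k β emb t (i.1+1) else 0) j)
            - ∑ j ∈ Finset.Icc ((2*i'-1)*β+1) (2*i'*β), spRowTermR
              (fun r l => if r = 2*((2*i.1+1)*β)-1 ∧ l = (2*i.1+1)*β
                then sigmaV k β emb t (i.1+1) else 0) j)
          = ∑ i : Fin k, (if i' = i.1+1 then -2*(sigmaV k β emb t (i.1+1)) else 0) := by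
        apply Finset.sum_congr rfl
        intro i _
        exact consFn_single k β hk hβ i (sigmaV k β emb t (i.1+1)) i' h1 h2
      rw [hsum]
      have hfinal : ∑ i : Fin k, (if i' = i.1+1 then -2*(sigmaV k β emb t (i.1+1)) else 0)
          = -2 * sigmaV k β emb t i' := by
        have hi0 : i' - 1 < k := by omega
        rw [Finset.sum_eq_single_of_mem ⟨i'-1, hi0⟩ (Finset.mem_univ _)]
        · rw [if_pos (by simp only; omega)]
          have : i' - 1 + 1 = i' := by omega
          simp only [this]
        · intro b _ hb
          apply if_neg
          intro hbe
          apply hb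
          apply Fin.ext
          simp only
          omega
      rw [hfinal]
      unfold sigmaV
      ring
    unfold consFn at hzero
    linarith [hzero]


end SpAux

/-- Lemma 4.4 (positivity of the leading-order coefficient, symplectic case): the set of
constrained continuous `(4kβ)`-symplectic Gelfand–Tsetlin patterns with top row `⟨1^{2kβ}⟩`,
viewed inside `ℝ^{4k²β²}`, has positive `(kβ(2kβ+1)−k)`-dimensional Hausdorff measure. -/
theorem symplectic_volume_positive (k β : ℕ) (hk : 0 < k) (hβ : 0 < β) :
    0 < μH[((k*β*(2*k*β+1) - k : ℕ) : ℝ)] (SpContPatterns k β) := by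
  classical
  set d : ℕ := k*β*(2*k*β+1) - k with hd
  set P : GTIdx (4*k*β-1) → Prop :=
    fun x => SpAux.FreeIdx k β x ∧ ∀ i : Fin k, x ≠ SpAux.distIdx k β hk hβ i with hP
  -- cardinality bound
  have hcard : d ≤ Fintype.card {x : GTIdx (4*k*β-1) // P x} := by
    have h1 : Fintype.card {x : GTIdx (4*k*β-1) // P x} = (Finset.univ.filter P).card :=
      Fintype.card_subtype P
    have h2 : Finset.univ.filter P =
        (Finset.univ.filter (SpAux.FreeIdx k β)) \
          (Finset.univ.image (SpAux.distIdx k β hk hβ)) := by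
      ext x
      simp only [Finset.mem_filter, Finset.mem_sdiff, Finset.mem_image, Finset.mem_univ,
        true_and, hP]
      constructor
      · rintro ⟨hf, hnd⟩
        exact ⟨hf, fun ⟨i, hi⟩ => hnd i hi.symm⟩
      · rintro ⟨hf, hnd⟩
        exact ⟨hf, fun i hi => hnd ⟨i, hi.symm⟩⟩
    have h3 : (Finset.univ.filter (SpAux.FreeIdx k β)).card = k*β*(2*k*β+1) := by
      rw [← Fintype.card_subtype]
      exact SpAux.card_freeIdx k β hk hβ
    have h4 : (Finset.univ.image (SpAux.distIdx k β hk hβ)).card ≤ k := by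
      calc (Finset.univ.image (SpAux.distIdx k β hk hβ)).card
          ≤ (Finset.univ : Finset (Fin k)).card := Finset.card_image_le
        _ = k := by simp
    have h5 := Finset.le_card_sdiff (Finset.univ.image (SpAux.distIdx k β hk hβ))
      (Finset.univ.filter (SpAux.FreeIdx k β))
    rw [h1, h2]
    omega
  obtain ⟨e⟩ := Function.Embedding.nonempty_of_card_le
    (show Fintype.card (Fin d) ≤ Fintype.card {x : GTIdx (4*k*β-1) // P x} by
      rwa [Fintype.card_fin])
  set emb : Fin d → GTIdx (4*k*β-1) := fun j => (e j).1 with hemb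
  have hembInj : Function.Injective emb := fun a b h => e.injective (Subtype.ext h)
  have hembF : ∀ j, SpAux.FreeIdx k β (emb j) := fun j => (e j).2.1
  have hembND : ∀ (j : Fin d) (i : Fin k), emb j ≠ SpAux.distIdx k β hk hβ i :=
    fun j i => (e j).2.2 i
  -- the coordinate projection
  set g : (GTIdx (4*k*β-1) → ℝ) → (Fin d → ℝ) := fun f j => f (emb j) with hg
  have hLip : LipschitzWith 1 g := by
    rw [lipschitzWith_iff_dist_le_mul]
    intro f f'
    rw [NNReal.coe_one, one_mul]
    rw [dist_pi_le_iff dist_nonneg]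
    intro j
    exact dist_le_pi_dist f f' (emb j)
  set η := SpAux.etaV k β with hη
  have hηpos : 0 < η := SpAux.etaV_pos k β hk hβ
  -- the cube
  set S : Set (Fin d → ℝ) := Set.univ.pi
    (fun j => Set.Icc (SpAux.basePt k β (emb j) - η) (SpAux.basePt k β (emb j) + η)) with hS
  have hSsub : S ⊆ g '' (SpContPatterns k β) := by
    intro y hy
    rw [Set.mem_pi] at hy
    set t : Fin d → ℝ := fun j => y j - SpAux.basePt k β (emb j) with ht
    have htb : ∀ j, |t j| ≤ η := by
      intro j
      have := hy j (Set.mem_univ j)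
      rw [Set.mem_Icc] at this
      rw [ht, abs_le]
      refine ⟨by simp only; linarith [this.1], by simp only; linarith [this.2]⟩
    refine ⟨SpAux.fullPt k β hk hβ emb t, ?_, ?_⟩
    · exact SpAux.fullPt_mem k β hk hβ emb hembF hembND hembInj t htb
    · funext j
      show SpAux.fullPt k β hk hβ emb t (emb j) = y j
      unfold SpAux.fullPt SpAux.uPt
      rw [SpAux.pertBase_at_emb k β emb hembInj t j]
      have hcorr : SpAux.corrPt k β hk hβ emb t (emb j) = 0 :=
        Finset.sum_eq_zero (fun i _ => if_neg (hembND j i))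
      rw [hcorr, ht]
      ring
  -- measure computation
  have hvol : 0 < volume S := by
    rw [hS, MeasureTheory.volume_pi_pi]
    have : ∀ j : Fin d, volume (Set.Icc (SpAux.basePt k β (emb j) - η)
        (SpAux.basePt k β (emb j) + η)) = ENNReal.ofReal (2*η) := by
      intro j
      rw [Real.volume_Icc]
      congr 1
      ring
    rw [Finset.prod_congr rfl (fun j _ => this j), Finset.prod_const]
    apply ENNReal.pow_pos
    exact ENNReal.ofReal_pos.2 (by linarith)
  have hHeqVol : (μH[(d:ℝ)] : Measure (Fin d → ℝ)) = volume := by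
    rw [← MeasureTheory.hausdorffMeasure_pi_real (ι := Fin d), Fintype.card_fin]
  have himage : μH[(d:ℝ)] (g '' (SpContPatterns k β))
      ≤ μH[(d:ℝ)] (SpContPatterns k β) := by
    have := hLip.hausdorffMeasure_image_le (d := (d:ℝ)) (Nat.cast_nonneg d)
      (SpContPatterns k β)
    simpa using this
  have hlow : 0 < μH[(d:ℝ)] (g '' (SpContPatterns k β)) := by
    calc (0 : ENNReal) < volume S := hvol
      _ = μH[(d:ℝ)] S := by rw [hHeqVol]
      _ ≤ μH[(d:ℝ)] (g '' (SpContPatterns k β)) := measure_mono hSsub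
  exact lt_of_lt_of_le hlow himage


end
end

section
/- Let s be a positive integer, m = ⌊(s+1)/2⌋, and let x₁ ≥ x₂ ≥ ⋯ ≥ x_m ≥ 0 be real numbers. Then vol_s(x₁,…,x_m) = ( ∏_{j=1}^{s} 1/(j−1)!! ) · det( x_{m+1−i}^{2(j−1)+δ} )_{i,j=1}^{m}, where δ = 1 if s is even and δ = 0 if s is odd. -/
noncomputable section
open MeasureTheory

/-- The entries of a continuous half pattern of length `s` whose rows `1,…,s−1` are encoded
by `f` and whose top row (row `s`, of length `⌈s/2⌉… = ⌊(s+1)/2⌋`) is given by `x`. -/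
def hpEnt (s : ℕ) (x : ℕ → ℝ) (f : GTIdx (s-1) → ℝ) (r l : ℕ) : ℝ :=
  if r = s then (if 1 ≤ l ∧ l ≤ rowLen s then x l else 0) else gtEnt f r l

/-- The set of continuous half patterns of length `s` with all entries nonnegative and with
top row `x`, identified with the vectors of the entries of rows `1,…,s−1` (a subset of
`ℝ^d`, `d = Σ_{r=1}^{s−1} ⌈r/2⌉`). -/
def HalfPatternSet (s : ℕ) (x : ℕ → ℝ) : Set (GTIdx (s-1) → ℝ) :=
  {f | (∀ r l, 1 ≤ r → r ≤ s → 1 ≤ l → l ≤ rowLen r → 0 ≤ hpEnt s x f r l) ∧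
       (∀ r l, 1 ≤ r → r ≤ s → 1 ≤ l → l + 1 ≤ rowLen r →
         hpEnt s x f r (l+1) ≤ hpEnt s x f r l) ∧
       (∀ r l, 1 ≤ r → r + 1 ≤ s → 1 ≤ l → l ≤ rowLen r →
         hpEnt s x f r l ≤ hpEnt s x f (r+1) l) ∧
       (∀ r l, 1 ≤ r → r + 1 ≤ s → 1 ≤ l → l ≤ rowLen r → l + 1 ≤ rowLen (r+1) →
         hpEnt s x f (r+1) (l+1) ≤ hpEnt s x f r l)}

/-- Double factorial, with `0‼ = 1‼ = 1` and `n‼ = n·(n−2)‼`. -/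
def dfac : ℕ → ℕ
  | 0 => 1
  | 1 => 1
  | (n+2) => (n+2) * dfac n






/-- Splitting off the top row of `GTIdx (n+1)`. -/
def splitIdx (n : ℕ) : GTIdx (n+1) ≃ (Fin ((n + 2)/2)) ⊕ GTIdx n where
  toFun := fun q => if h : q.1.1 < n then Sum.inr ⟨⟨q.1.1, h⟩, ⟨q.2.1, q.2.2⟩⟩
    else Sum.inl ⟨q.2.1, by have _h1 := q.1.2; have h2 := q.2.2; omega⟩
  invFun := Sum.elim (fun l => ⟨⟨n, Nat.lt_succ_self n⟩, ⟨l.1, l.2⟩⟩)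
    (fun q => ⟨⟨q.1.1, Nat.lt_succ_of_lt q.1.2⟩, ⟨q.2.1, q.2.2⟩⟩)
  left_inv := by
    rintro ⟨⟨i, hi⟩, ⟨l, hl⟩⟩
    by_cases h : i < n
    · simp [h]
    · have : i = n := by omega
      subst this
      simp [h]
  right_inv := by
    rintro (⟨l, hl⟩ | ⟨⟨i, hi⟩, ⟨l, hl⟩⟩)
    · simp
    · simp [hi]

/-- The measure preserving equivalence splitting off the top row. -/
def phiEquiv (n : ℕ) : ((Fin ((n + 2)/2) → ℝ) × (GTIdx n → ℝ)) ≃ᵐ (GTIdx (n+1) → ℝ) :=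
  (MeasurableEquiv.sumPiEquivProdPi (fun _ : (Fin ((n + 2)/2)) ⊕ GTIdx n => ℝ)).symm.trans
    (MeasurableEquiv.piCongrLeft (fun _ => ℝ) (splitIdx n).symm)

lemma phiEquiv_apply (n : ℕ) (y : Fin ((n + 2)/2) → ℝ) (g : GTIdx n → ℝ) (q : GTIdx (n+1)) :
    phiEquiv n (y, g) q = Sum.elim y g (splitIdx n q) := by
  show (MeasurableEquiv.piCongrLeft (fun _ => ℝ) (splitIdx n).symm)
      ((MeasurableEquiv.sumPiEquivProdPi _).symm (y, g)) q = _
  rw [MeasurableEquiv.coe_piCongrLeft, Equiv.piCongrLeft_apply_eq_cast]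
  rw [MeasurableEquiv.coe_sumPiEquivProdPi_symm]
  simp only [Equiv.symm_symm, cast_eq]
  rcases h : splitIdx n q with l | p <;>
    simp [Equiv.sumPiEquivProdPi, h]

lemma phiEquiv_measurePreserving (n : ℕ) :
    MeasurePreserving (phiEquiv n) (volume.prod volume) volume := by
  have h1 := MeasureTheory.volume_measurePreserving_sumPiEquivProdPi_symm
      (fun _ : (Fin ((n + 2)/2)) ⊕ GTIdx n => ℝ)
  have h2 := MeasureTheory.volume_measurePreserving_piCongrLeft (fun _ : GTIdx (n+1) => ℝ)
      (splitIdx n).symm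
  exact h2.comp h1

/-- Extension of a top row vector to a function on ℕ (1-based). -/
def extRow (n : ℕ) (y : Fin ((n+2)/2) → ℝ) : ℕ → ℝ :=
  fun l => if h : 1 ≤ l ∧ l ≤ (n+2)/2 then y ⟨l-1, by omega⟩ else 0

lemma splitIdx_low (n : ℕ) (q : GTIdx (n+1)) (h : q.1.1 < n) :
    splitIdx n q = Sum.inr ⟨⟨q.1.1, h⟩, ⟨q.2.1, q.2.2⟩⟩ := dif_pos h

lemma splitIdx_high (n : ℕ) (q : GTIdx (n+1)) (h : ¬ q.1.1 < n) :
    splitIdx n q = Sum.inl ⟨q.2.1, by have _h1 := q.1.2; have h2 := q.2.2; omega⟩ := dif_neg h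

lemma phiEquiv_top (n : ℕ) (y : Fin ((n+2)/2) → ℝ) (g : GTIdx n → ℝ) (k : Fin ((n+2)/2)) :
    phiEquiv n (y, g) ⟨⟨n, Nat.lt_succ_self n⟩, ⟨k.1, k.2⟩⟩ = y k := by
  rw [phiEquiv_apply, splitIdx_high n _ (show ¬(n < n) by omega)]
  rw [Sum.elim_inl]

lemma phiEquiv_low (n : ℕ) (y : Fin ((n+2)/2) → ℝ) (g : GTIdx n → ℝ) (q : GTIdx n) :
    phiEquiv n (y, g) ⟨⟨q.1.1, lt_trans q.1.2 (Nat.lt_succ_self n)⟩, ⟨q.2.1, q.2.2⟩⟩ = g q := by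
  rw [phiEquiv_apply, splitIdx_low n _ (show q.1.1 < n from q.1.2)]
  rw [Sum.elim_inr]

lemma gtEnt_phi (n : ℕ) (y : Fin ((n+2)/2) → ℝ) (g : GTIdx n → ℝ) (r l : ℕ) :
    gtEnt (phiEquiv n (y, g)) r l =
      if r = n+1 then (if 1 ≤ l ∧ l ≤ rowLen (n+1) then extRow n y l else 0)
      else gtEnt g r l := by
  simp only [show rowLen (n+1) = (n+2)/2 from rfl]
  by_cases hr : r = n+1
  · subst hr
    rw [if_pos rfl]
    unfold gtEnt
    by_cases hl : 1 ≤ l ∧ l ≤ (n+2)/2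
    · rw [dif_pos (show 1 ≤ n+1 ∧ n+1 ≤ n+1 ∧ 1 ≤ l ∧ l ≤ (n+1+1)/2 by omega)]
      rw [if_pos hl]
      unfold extRow
      rw [dif_pos hl]
      exact phiEquiv_top n y g ⟨l-1, by omega⟩
    · rw [dif_neg (show ¬(1 ≤ n+1 ∧ n+1 ≤ n+1 ∧ 1 ≤ l ∧ l ≤ (n+1+1)/2) by omega),
        if_neg hl]
  · rw [if_neg hr]
    unfold gtEnt
    by_cases hg : 1 ≤ r ∧ r ≤ n ∧ 1 ≤ l ∧ l ≤ (r+1)/2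
    · rw [dif_pos (show 1 ≤ r ∧ r ≤ n+1 ∧ 1 ≤ l ∧ l ≤ (r+1)/2 by omega), dif_pos hg]
      exact phiEquiv_low n y g ⟨⟨r-1, by omega⟩, ⟨l-1, show l-1 < (r-1+2)/2 by omega⟩⟩
    · rw [dif_neg (show ¬(1 ≤ r ∧ r ≤ n+1 ∧ 1 ≤ l ∧ l ≤ (r+1)/2) by omega), dif_neg hg]

lemma hpEnt_phi (n : ℕ) (x : ℕ → ℝ) (y : Fin ((n+2)/2) → ℝ) (g : GTIdx n → ℝ)
    (r l : ℕ) (hr : r ≠ n+2) :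
    hpEnt (n+2) x (phiEquiv n (y, g)) r l = hpEnt (n+1) (extRow n y) g r l := by
  unfold hpEnt
  rw [if_neg hr, gtEnt_phi]

lemma hpEnt_top (n : ℕ) (x : ℕ → ℝ) (f : GTIdx (n+1) → ℝ) (l : ℕ) :
    hpEnt (n+2) x f (n+2) l = if 1 ≤ l ∧ l ≤ rowLen (n+2) then x l else 0 := by
  unfold hpEnt; rw [if_pos rfl]

def lowB (n : ℕ) (x : ℕ → ℝ) (k : Fin ((n+2)/2)) : ℝ :=
  if k.1+2 ≤ (n+3)/2 then x (k.1+2) else 0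

def upB (n : ℕ) (x : ℕ → ℝ) (k : Fin ((n+2)/2)) : ℝ := x (k.1+1)

def IBox (n : ℕ) (x : ℕ → ℝ) : Set (Fin ((n+2)/2) → ℝ) :=
  Set.univ.pi fun k => Set.Icc (lowB n x k) (upB n x k)

lemma mem_IBox {n : ℕ} {x : ℕ → ℝ} {y : Fin ((n+2)/2) → ℝ} :
    y ∈ IBox n x ↔ ∀ k, lowB n x k ≤ y k ∧ y k ≤ upB n x k := by
  unfold IBox
  rw [Set.mem_univ_pi]
  simp only [Set.mem_Icc]

lemma hpEnt_mid' (n : ℕ) (x : ℕ → ℝ) (y : Fin ((n+2)/2) → ℝ) (g : GTIdx n → ℝ)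
    (l : ℕ) (h1 : 1 ≤ l) (h2 : l ≤ (n+2)/2) :
    hpEnt (n+2) x (phiEquiv n (y, g)) (n+1) l = y ⟨l-1, by omega⟩ := by
  rw [hpEnt_phi _ _ _ _ _ _ (by omega)]
  unfold hpEnt
  rw [if_pos rfl, if_pos (show 1 ≤ l ∧ l ≤ rowLen (n+1) from ⟨h1, h2⟩)]
  unfold extRow
  rw [dif_pos ⟨h1, h2⟩]

lemma hpEnt_topval (n : ℕ) (x : ℕ → ℝ) (f : GTIdx (n+1) → ℝ) (l : ℕ)
    (h1 : 1 ≤ l) (h2 : l ≤ (n+3)/2) :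
    hpEnt (n+2) x f (n+2) l = x l := by
  unfold hpEnt
  rw [if_pos rfl, if_pos (show 1 ≤ l ∧ l ≤ rowLen (n+2) from ⟨h1, h2⟩)]

lemma mem_HPS_phi (n : ℕ) (x : ℕ → ℝ)
    (hnn : ∀ l, 1 ≤ l → l ≤ (n+3)/2 → 0 ≤ x l)
    (hmono : ∀ l, 1 ≤ l → l + 1 ≤ (n+3)/2 → x (l+1) ≤ x l)
    (y : Fin ((n+2)/2) → ℝ) (g : GTIdx n → ℝ) :
    phiEquiv n (y, g) ∈ HalfPatternSet (n+2) x ↔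
      y ∈ IBox n x ∧ g ∈ HalfPatternSet (n+1) (extRow n y) := by
  have hr1 : rowLen (n+1) = (n+2)/2 := rfl
  have hr2 : rowLen (n+2) = (n+3)/2 := rfl
  constructor
  · rintro ⟨H1, H2, H3, H4⟩
    refine ⟨mem_IBox.2 fun k => ⟨?_, ?_⟩, fun r l h1 h2 h3 h4 => ?_,
      fun r l h1 h2 h3 h4 => ?_, fun r l h1 h2 h3 h4 => ?_,
      fun r l h1 h2 h3 h4 h5 => ?_⟩
    · -- lower bound
      have hk := k.2
      unfold lowB
      by_cases hlow : k.1+2 ≤ (n+3)/2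
      · rw [if_pos hlow]
        have := H4 (n+1) (k.1+1) (by omega) (by omega) (by omega)
          (show k.1+1 ≤ rowLen (n+1) from by rw [hr1]; omega)
          (show k.1+2 ≤ rowLen (n+2) from by rw [hr2]; omega)
        rw [hpEnt_mid' n x y g (k.1+1) (by omega) (by omega),
          hpEnt_topval n x _ (k.1+2) (by omega) (by omega)] at this
        simpa using this
      · rw [if_neg hlow]
        have := H1 (n+1) (k.1+1) (by omega) (by omega) (by omega)
          (show k.1+1 ≤ rowLen (n+1) from by rw [hr1]; omega)
        rw [hpEnt_mid' n x y g (k.1+1) (by omega) (by omega)] at this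
        simpa using this
    · -- upper bound
      have hk := k.2
      have := H3 (n+1) (k.1+1) (by omega) (by omega) (by omega)
        (show k.1+1 ≤ rowLen (n+1) from by rw [hr1]; omega)
      rw [hpEnt_mid' n x y g (k.1+1) (by omega) (by omega),
        hpEnt_topval n x _ (k.1+1) (by omega) (by omega)] at this
      simpa [upB] using this
    · rw [← hpEnt_phi n x y g r l (by omega)]
      exact H1 r l h1 (by omega) h3 h4
    · rw [← hpEnt_phi n x y g r (l+1) (by omega), ← hpEnt_phi n x y g r l (by omega)]
      exact H2 r l h1 (by omega) h3 h4
    · rw [← hpEnt_phi n x y g r l (by omega), ← hpEnt_phi n x y g (r+1) l (by omega)]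
      exact H3 r l h1 (by omega) h3 h4
    · rw [← hpEnt_phi n x y g (r+1) (l+1) (by omega), ← hpEnt_phi n x y g r l (by omega)]
      exact H4 r l h1 (by omega) h3 h4 h5
  · rintro ⟨hy, G1, G2, G3, G4⟩
    rw [mem_IBox] at hy
    refine ⟨fun r l h1 h2 h3 h4 => ?_, fun r l h1 h2 h3 h4 => ?_,
      fun r l h1 h2 h3 h4 => ?_, fun r l h1 h2 h3 h4 h5 => ?_⟩
    · by_cases hr : r = n+2
      · subst hr
        rw [hpEnt_topval n x _ l h3 h4]
        exact hnn l h3 h4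
      · rw [hpEnt_phi n x y g r l hr]
        exact G1 r l h1 (by omega) h3 h4
    · by_cases hr : r = n+2
      · subst hr
        have h4' : (l:ℕ)+1 ≤ (n+3)/2 := h4
        rw [hpEnt_topval n x _ (l+1) (by omega) (by omega),
          hpEnt_topval n x _ l h3 (by omega)]
        exact hmono l h3 h4'
      · rw [hpEnt_phi n x y g r (l+1) hr, hpEnt_phi n x y g r l hr]
        exact G2 r l h1 (by omega) h3 h4
    · by_cases hr : r = n+1
      · subst hr
        have h4' : (l:ℕ) ≤ (n+2)/2 := h4
        rw [hpEnt_mid' n x y g l h3 h4', hpEnt_topval n x _ l h3 (by omega)]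
        have := (hy ⟨l-1, by omega⟩).2
        unfold upB at this
        simpa [show l-1+1 = l by omega] using this
      · rw [hpEnt_phi n x y g r l (by omega), hpEnt_phi n x y g (r+1) l (by omega)]
        exact G3 r l h1 (by omega) h3 h4
    · by_cases hr : r = n+1
      · subst hr
        have h4' : (l:ℕ) ≤ (n+2)/2 := h4
        have h5' : (l:ℕ)+1 ≤ (n+3)/2 := h5
        rw [hpEnt_mid' n x y g l h3 h4', hpEnt_topval n x _ (l+1) (by omega) (by omega)]
        have := (hy ⟨l-1, by omega⟩).1
        unfold lowB at this
        rw [if_pos (show l-1+2 ≤ (n+3)/2 by omega)] at this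
        simpa [show l-1+2 = l+1 by omega] using this
      · rw [hpEnt_phi n x y g (r+1) (l+1) (by omega), hpEnt_phi n x y g r l (by omega)]
        exact G4 r l h1 (by omega) h3 h4 h5

lemma continuous_hpEnt (s : ℕ) (x : ℕ → ℝ) (r l : ℕ) :
    Continuous (fun f : GTIdx (s-1) → ℝ => hpEnt s x f r l) := by
  unfold hpEnt gtEnt
  split_ifs <;> first
    | exact continuous_const
    | exact continuous_apply _

lemma isClosed_HPS (s : ℕ) (x : ℕ → ℝ) : IsClosed (HalfPatternSet s x) := by
  unfold HalfPatternSet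
  rw [Set.setOf_and]
  apply IsClosed.inter
  · have : {f : GTIdx (s-1) → ℝ |
        ∀ r l, 1 ≤ r → r ≤ s → 1 ≤ l → l ≤ rowLen r → 0 ≤ hpEnt s x f r l} =
        ⋂ r, ⋂ l, {f | 1 ≤ r → r ≤ s → 1 ≤ l → l ≤ rowLen r → 0 ≤ hpEnt s x f r l} := by
      ext f; simp
    rw [this]
    refine isClosed_iInter fun r => isClosed_iInter fun l => ?_
    by_cases h : 1 ≤ r ∧ r ≤ s ∧ 1 ≤ l ∧ l ≤ rowLen r
    · have : {f : GTIdx (s-1) → ℝ | 1 ≤ r → r ≤ s → 1 ≤ l → l ≤ rowLen r →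
          0 ≤ hpEnt s x f r l} = {f | 0 ≤ hpEnt s x f r l} := by
        ext f; simp only [Set.mem_setOf_eq]; tauto
      rw [this]
      exact isClosed_le continuous_const (continuous_hpEnt s x r l)
    · have : {f : GTIdx (s-1) → ℝ | 1 ≤ r → r ≤ s → 1 ≤ l → l ≤ rowLen r →
          0 ≤ hpEnt s x f r l} = Set.univ := by
        ext f; simp only [Set.mem_setOf_eq, Set.mem_univ, iff_true]; tauto
      rw [this]; exact isClosed_univ
  rw [Set.setOf_and]
  apply IsClosed.inter
  · have : {f : GTIdx (s-1) → ℝ | ∀ r l, 1 ≤ r → r ≤ s → 1 ≤ l → l + 1 ≤ rowLen r →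
        hpEnt s x f r (l+1) ≤ hpEnt s x f r l} =
        ⋂ r, ⋂ l, {f | 1 ≤ r → r ≤ s → 1 ≤ l → l + 1 ≤ rowLen r →
          hpEnt s x f r (l+1) ≤ hpEnt s x f r l} := by
      ext f; simp
    rw [this]
    refine isClosed_iInter fun r => isClosed_iInter fun l => ?_
    by_cases h : 1 ≤ r ∧ r ≤ s ∧ 1 ≤ l ∧ l + 1 ≤ rowLen r
    · have : {f : GTIdx (s-1) → ℝ | 1 ≤ r → r ≤ s → 1 ≤ l → l + 1 ≤ rowLen r →
          hpEnt s x f r (l+1) ≤ hpEnt s x f r l} =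
          {f | hpEnt s x f r (l+1) ≤ hpEnt s x f r l} := by
        ext f; simp only [Set.mem_setOf_eq]; tauto
      rw [this]
      exact isClosed_le (continuous_hpEnt s x r (l+1)) (continuous_hpEnt s x r l)
    · have : {f : GTIdx (s-1) → ℝ | 1 ≤ r → r ≤ s → 1 ≤ l → l + 1 ≤ rowLen r →
          hpEnt s x f r (l+1) ≤ hpEnt s x f r l} = Set.univ := by
        ext f; simp only [Set.mem_setOf_eq, Set.mem_univ, iff_true]; tauto
      rw [this]; exact isClosed_univ
  rw [Set.setOf_and]
  apply IsClosed.inter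
  · have : {f : GTIdx (s-1) → ℝ | ∀ r l, 1 ≤ r → r + 1 ≤ s → 1 ≤ l → l ≤ rowLen r →
        hpEnt s x f r l ≤ hpEnt s x f (r+1) l} =
        ⋂ r, ⋂ l, {f | 1 ≤ r → r + 1 ≤ s → 1 ≤ l → l ≤ rowLen r →
          hpEnt s x f r l ≤ hpEnt s x f (r+1) l} := by
      ext f; simp
    rw [this]
    refine isClosed_iInter fun r => isClosed_iInter fun l => ?_
    by_cases h : 1 ≤ r ∧ r + 1 ≤ s ∧ 1 ≤ l ∧ l ≤ rowLen r
    · have : {f : GTIdx (s-1) → ℝ | 1 ≤ r → r + 1 ≤ s → 1 ≤ l → l ≤ rowLen r →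
          hpEnt s x f r l ≤ hpEnt s x f (r+1) l} =
          {f | hpEnt s x f r l ≤ hpEnt s x f (r+1) l} := by
        ext f; simp only [Set.mem_setOf_eq]; tauto
      rw [this]
      exact isClosed_le (continuous_hpEnt s x r l) (continuous_hpEnt s x (r+1) l)
    · have : {f : GTIdx (s-1) → ℝ | 1 ≤ r → r + 1 ≤ s → 1 ≤ l → l ≤ rowLen r →
          hpEnt s x f r l ≤ hpEnt s x f (r+1) l} = Set.univ := by
        ext f; simp only [Set.mem_setOf_eq, Set.mem_univ, iff_true]; tauto
      rw [this]; exact isClosed_univ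
  · have : {f : GTIdx (s-1) → ℝ | ∀ r l, 1 ≤ r → r + 1 ≤ s → 1 ≤ l → l ≤ rowLen r →
        l + 1 ≤ rowLen (r+1) → hpEnt s x f (r+1) (l+1) ≤ hpEnt s x f r l} =
        ⋂ r, ⋂ l, {f | 1 ≤ r → r + 1 ≤ s → 1 ≤ l → l ≤ rowLen r →
          l + 1 ≤ rowLen (r+1) → hpEnt s x f (r+1) (l+1) ≤ hpEnt s x f r l} := by
      ext f; simp
    rw [this]
    refine isClosed_iInter fun r => isClosed_iInter fun l => ?_
    by_cases h : 1 ≤ r ∧ r + 1 ≤ s ∧ 1 ≤ l ∧ l ≤ rowLen r ∧ l + 1 ≤ rowLen (r+1)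
    · have : {f : GTIdx (s-1) → ℝ | 1 ≤ r → r + 1 ≤ s → 1 ≤ l → l ≤ rowLen r →
          l + 1 ≤ rowLen (r+1) → hpEnt s x f (r+1) (l+1) ≤ hpEnt s x f r l} =
          {f | hpEnt s x f (r+1) (l+1) ≤ hpEnt s x f r l} := by
        ext f; simp only [Set.mem_setOf_eq]; tauto
      rw [this]
      exact isClosed_le (continuous_hpEnt s x (r+1) (l+1)) (continuous_hpEnt s x r l)
    · have : {f : GTIdx (s-1) → ℝ | 1 ≤ r → r + 1 ≤ s → 1 ≤ l → l ≤ rowLen r →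
          l + 1 ≤ rowLen (r+1) → hpEnt s x f (r+1) (l+1) ≤ hpEnt s x f r l} = Set.univ := by
        ext f; simp only [Set.mem_setOf_eq, Set.mem_univ, iff_true]; tauto
      rw [this]; exact isClosed_univ

lemma volume_rec (n : ℕ) (x : ℕ → ℝ)
    (hnn : ∀ l, 1 ≤ l → l ≤ (n+3)/2 → 0 ≤ x l)
    (hmono : ∀ l, 1 ≤ l → l + 1 ≤ (n+3)/2 → x (l+1) ≤ x l) :
    volume (HalfPatternSet (n+2) x) =
      ∫⁻ y : Fin ((n+2)/2) → ℝ, (IBox n x).indicator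
        (fun y => volume (HalfPatternSet (n+1) (extRow n y))) y := by
  have hS : MeasurableSet (HalfPatternSet (n+2) x) := (isClosed_HPS _ _).measurableSet
  have mp := phiEquiv_measurePreserving n
  have h1 : volume (HalfPatternSet (n+2) x)
      = (volume.prod volume) (phiEquiv n ⁻¹' HalfPatternSet (n+2) x) :=
    (mp.measure_preimage hS.nullMeasurableSet).symm
  rw [h1, Measure.prod_apply ((phiEquiv n).measurable hS)]
  refine lintegral_congr fun y => ?_
  by_cases hy : y ∈ IBox n x
  · rw [Set.indicator_of_mem hy]
    congr 1
    ext g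
    simp only [Set.mem_preimage]
    rw [mem_HPS_phi n x hnn hmono y g]
    simp [hy]
  · rw [Set.indicator_of_notMem hy]
    have : (Prod.mk y ⁻¹' (phiEquiv n ⁻¹' HalfPatternSet (n+2) x)) = ∅ := by
      ext g
      simp only [Set.mem_preimage, Set.mem_empty_iff_false, iff_false]
      rw [mem_HPS_phi n x hnn hmono y g]
      tauto
    rw [this, measure_empty]

open Equiv in
lemma int_det (m : ℕ) (a b : Fin m → ℝ) (hab : ∀ k, a k ≤ b k) (E : Fin m → ℕ)
    (ρ : Equiv.Perm (Fin m)) :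
    (∫ y : Fin m → ℝ, (Set.univ.pi fun k => Set.Icc (a k) (b k)).indicator
      (fun y => (Matrix.of fun i j => y (ρ i) ^ E j).det) y)
    = (Matrix.of fun i j : Fin m =>
        ((b (ρ i)) ^ (E j + 1) - (a (ρ i)) ^ (E j + 1)) / ((E j : ℝ) + 1)).det := by
  classical
  set g : Fin m → ℕ → ℝ → ℝ := fun k e => (Set.Icc (a k) (b k)).indicator (fun t => t ^ e)
    with hg
  set C : Matrix (Fin m) (Fin m) ℝ :=
    Matrix.of fun i j => ((b i) ^ (E j + 1) - (a i) ^ (E j + 1)) / ((E j : ℝ) + 1) with hC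
  have hgint : ∀ k e, Integrable (g k e) := fun k e =>
    ((continuous_pow e).integrableOn_Icc).integrable_indicator measurableSet_Icc
  have hgval : ∀ (k j : Fin m), (∫ t, g k (E j) t) = C k j := by
    intro k j
    rw [hg]
    simp only []
    rw [MeasureTheory.integral_indicator measurableSet_Icc,
      MeasureTheory.integral_Icc_eq_integral_Ioc,
      ← intervalIntegral.integral_of_le (hab k), integral_pow]
    rw [hC]
    simp only [Matrix.of_apply]
  have hpt : ∀ y : Fin m → ℝ, (Set.univ.pi fun k => Set.Icc (a k) (b k)).indicator
      (fun y => (Matrix.of fun i j => y (ρ i) ^ E j).det) y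
      = ∑ σ : Equiv.Perm (Fin m), ((Equiv.Perm.sign σ : ℤ) : ℝ) *
          ∏ k, g k (E ((σ.trans ρ).symm k)) (y k) := by
    intro y
    by_cases hy : y ∈ Set.univ.pi fun k => Set.Icc (a k) (b k)
    · rw [Set.indicator_of_mem hy, Matrix.det_apply']
      refine Finset.sum_congr rfl fun σ _ => ?_
      congr 1
      calc ∏ i, (Matrix.of fun i j => y (ρ i) ^ E j) (σ i) i
          = ∏ i, (fun k => y k ^ E ((σ.trans ρ).symm k)) ((σ.trans ρ) i) :=
            Finset.prod_congr rfl fun i _ => by simp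
        _ = ∏ k, (fun k => y k ^ E ((σ.trans ρ).symm k)) k :=
            Equiv.prod_comp (σ.trans ρ) (fun k => y k ^ E ((σ.trans ρ).symm k))
        _ = ∏ k, g k (E ((σ.trans ρ).symm k)) (y k) := by
            refine Finset.prod_congr rfl fun k _ => ?_
            rw [hg]
            exact (Set.indicator_of_mem (hy k (Set.mem_univ k)) _).symm
    · rw [Set.indicator_of_notMem hy]
      rw [Set.mem_univ_pi] at hy
      push_neg at hy
      obtain ⟨k0, hk0⟩ := hy
      symm
      refine Finset.sum_eq_zero fun σ _ => ?_
      rw [Finset.prod_eq_zero (Finset.mem_univ k0)]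
      · ring
      · rw [hg]; simp only []
        rw [Set.indicator_of_notMem hk0]
  rw [MeasureTheory.integral_congr_ae (Filter.Eventually.of_forall hpt)]
  rw [MeasureTheory.integral_finset_sum (μ := volume) _ (fun σ _ =>
    (MeasureTheory.Integrable.fintype_prod (fun k => hgint k _)).const_mul _)]
  have hterm : ∀ σ : Equiv.Perm (Fin m),
      (∫ y : Fin m → ℝ, ((Equiv.Perm.sign σ : ℤ) : ℝ) *
        ∏ k, g k (E ((σ.trans ρ).symm k)) (y k))
      = ((Equiv.Perm.sign σ : ℤ) : ℝ) * ∏ k, C k ((σ.trans ρ).symm k) := by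
    intro σ
    rw [MeasureTheory.integral_const_mul,
      show (∫ y : Fin m → ℝ, ∏ k, g k (E ((σ.trans ρ).symm k)) (y k))
        = ∏ k, ∫ t, g k (E ((σ.trans ρ).symm k)) t from
      MeasureTheory.integral_fintype_prod_eq_prod (𝕜 := ℝ)
        (fun k => g k (E ((σ.trans ρ).symm k)))]
    congr 1
    exact Finset.prod_congr rfl fun k _ => hgval k _
  rw [Finset.sum_congr rfl fun σ _ => hterm σ]
  have hsum : (∑ σ : Equiv.Perm (Fin m), ((Equiv.Perm.sign σ : ℤ) : ℝ) *
      ∏ k, C k ((σ.trans ρ).symm k))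
      = ((Equiv.Perm.sign ρ : ℤ) : ℝ) * C.det := by
    have hbij : Function.Bijective (fun σ : Equiv.Perm (Fin m) => (σ.trans ρ).symm) := by
      constructor
      · intro σ τ h
        have h2 : σ.trans ρ = τ.trans ρ := by
          simpa using congrArg Equiv.symm h
        have h3 := congrArg (fun e => e.trans ρ.symm) h2
        simpa [Equiv.trans_assoc] using h3
      · intro π
        exact ⟨π.symm.trans ρ.symm, by simp [Equiv.trans_assoc]⟩
    rw [Fintype.sum_bijective _ hbij _
      (fun π => ((Equiv.Perm.sign ρ : ℤ) : ℝ) * (((Equiv.Perm.sign π : ℤ) : ℝ) *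
        ∏ k, C k (π k))) ?_]
    · rw [← Finset.mul_sum]
      congr 1
      rw [← Matrix.det_transpose C, Matrix.det_apply']
      rfl
    · intro σ
      show ((Equiv.Perm.sign σ : ℤ) : ℝ) * ∏ k, C k ((σ.trans ρ).symm k)
        = ((Equiv.Perm.sign ρ : ℤ) : ℝ) * (((Equiv.Perm.sign ((σ.trans ρ).symm) : ℤ) : ℝ) *
          ∏ k, C k ((σ.trans ρ).symm k))
      have hsgn : Equiv.Perm.sign ((σ.trans ρ).symm) = Equiv.Perm.sign σ * Equiv.Perm.sign ρ := by
        rw [Equiv.Perm.sign_symm, show σ.trans ρ = ρ * σ from rfl, map_mul]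
        exact mul_comm _ _
      rcases Int.units_eq_one_or (Equiv.Perm.sign σ) with h2 | h2 <;>
        rcases Int.units_eq_one_or (Equiv.Perm.sign ρ) with h3 | h3 <;>
        rw [hsgn, h2, h3] <;> push_cast <;> ring
  rw [hsum]
  have heq : (Matrix.of fun i j : Fin m =>
      ((b (ρ i)) ^ (E j + 1) - (a (ρ i)) ^ (E j + 1)) / ((E j : ℝ) + 1)) =
      C.submatrix ρ id := by
    ext i j
    rw [hC]
    rfl
  rw [heq, Matrix.det_permute]

theorem dfac_pos : ∀ n, 0 < dfac n
  | 0 => Nat.one_pos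
  | 1 => Nat.one_pos
  | (n+2) => Nat.mul_pos (by omega) (dfac_pos n)

lemma dfac_odd : ∀ t : ℕ, dfac (2*t+1) = ∏ j : Fin (t+1), (2*j.1+1)
  | 0 => by simp [dfac]
  | (t+1) => by
    have h : 2*(t+1)+1 = (2*t+1)+2 := by ring
    rw [h, dfac, dfac_odd t, Fin.prod_univ_castSucc (n := t+1)]
    simp only [Fin.coe_castSucc, Fin.val_last]
    ring

lemma dfac_even : ∀ t : ℕ, dfac (2*t+2) = ∏ j : Fin (t+1), (2*j.1+2)
  | 0 => by simp [dfac]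
  | (t+1) => by
    have h : 2*(t+1)+2 = (2*t+2)+2 := by ring
    rw [h, dfac, dfac_even t, Fin.prod_univ_castSucc (n := t+1)]
    simp only [Fin.coe_castSucc, Fin.val_last]
    ring

/-- Even step algebra: telescoping rows. -/
lemma even_alg (t : ℕ) (x : ℕ → ℝ) :
    (Matrix.of fun i j : Fin (t+1) =>
      (x (t+1-i.1) ^ (2*j.1+1) - (if 1 ≤ i.1 then x (t+2-i.1) else 0) ^ (2*j.1+1))
        / ((2*j.1 : ℝ)+1)).det
    = (∏ j : Fin (t+1), ((2*j.1 : ℝ)+1)⁻¹) *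
      (Matrix.of fun i j : Fin (t+1) => x (t+1-i.1) ^ (2*j.1+1)).det := by
  have hcol : (Matrix.of fun i j : Fin (t+1) =>
      (x (t+1-i.1) ^ (2*j.1+1) - (if 1 ≤ i.1 then x (t+2-i.1) else 0) ^ (2*j.1+1))
        / ((2*j.1 : ℝ)+1))
      = Matrix.of fun i j : Fin (t+1) => ((2*j.1 : ℝ)+1)⁻¹ *
        (x (t+1-i.1) ^ (2*j.1+1) - (if 1 ≤ i.1 then x (t+2-i.1) else 0) ^ (2*j.1+1)) := by
    ext i j; simp [div_eq_inv_mul]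
  rw [hcol]
  refine (Matrix.det_mul_row (fun j : Fin (t+1) => ((2*j.1 : ℝ)+1)⁻¹) (Matrix.of fun i j : Fin (t+1) =>
    x (t+1-i.1) ^ (2*j.1+1) - (if 1 ≤ i.1 then x (t+2-i.1) else 0) ^ (2*j.1+1))).trans ?_
  congr 1
  refine (Matrix.det_eq_of_forall_row_eq_smul_add_pred
      (A := Matrix.of fun i j : Fin (t+1) => x (t+1-i.1) ^ (2*j.1+1))
      (B := Matrix.of fun i j : Fin (t+1) =>
        (x (t+1-i.1) ^ (2*j.1+1) - (if 1 ≤ i.1 then x (t+2-i.1) else 0) ^ (2*j.1+1)))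
      (c := fun _ => 1) (fun j => ?_) (fun i j => ?_)).symm
  · simp only [Matrix.of_apply, Fin.val_zero, if_neg (by omega : ¬ (1:ℕ) ≤ 0)]
    simp
  · have h1 : (i.succ : ℕ) = i.1 + 1 := rfl
    have h2 : (i.castSucc : ℕ) = i.1 := rfl
    simp only [Matrix.of_apply, h1, h2]
    have hle : 1 ≤ i.1 + 1 := by omega
    rw [if_pos hle]
    have hi : i.1 < t := i.2
    have e1 : t+2-(i.1+1) = t+1-i.1 := by omega
    rw [e1]
    ring

/-- Odd step algebra part 1: telescoping rows. -/
lemma odd_alg1 (t : ℕ) (x : ℕ → ℝ) :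
    (Matrix.of fun i j : Fin (t+1) =>
        x (t+1-i.1) ^ (2*j.1+2) - x (t+2) ^ (2*j.1+2)).det
    = (Matrix.of fun i j : Fin (t+1) =>
        x (t+1-i.1) ^ (2*j.1+2) - x (t+2-i.1) ^ (2*j.1+2)).det := by
  refine Matrix.det_eq_of_forall_row_eq_smul_add_pred (c := fun _ => 1) (fun j => ?_)
    (fun i j => ?_)
  · simp
  · have h1 : (i.succ : ℕ) = i.1 + 1 := rfl
    have h2 : (i.castSucc : ℕ) = i.1 := rfl
    simp only [Matrix.of_apply, h1, h2]
    have hi : i.1 < t := i.2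
    have e1 : t+2-(i.1+1) = t+1-i.1 := by omega
    rw [e1]
    ring

/-- Odd step algebra part 2: expanding the bigger determinant along the first column. -/
lemma odd_alg2 (t : ℕ) (x : ℕ → ℝ) :
    (Matrix.of fun i j : Fin (t+2) => x (t+2-i.1) ^ (2*j.1)).det
    = (Matrix.of fun i j : Fin (t+1) =>
        x (t+1-i.1) ^ (2*j.1+2) - x (t+2) ^ (2*j.1+2)).det := by
  have hdet : (Matrix.of fun i j : Fin (t+2) => x (t+2-i.1) ^ (2*j.1)).det
      = (Matrix.of fun i j : Fin (t+2) =>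
          x (t+2-i.1) ^ (2*j.1) + (if i.1 = 0 then (0:ℝ) else -1) * x (t+2) ^ (2*j.1)).det := by
    refine (Matrix.det_eq_of_forall_row_eq_smul_add_const
      (fun i : Fin (t+2) => if i.1 = 0 then (0:ℝ) else -1) 0 (by simp) (fun i j => ?_)).symm
    simp only [Matrix.of_apply, Fin.val_zero]
    norm_num
  rw [hdet, Matrix.det_succ_column_zero, Finset.sum_eq_single 0]
  · have hsub : ((Matrix.of fun i j : Fin (t+2) =>
        x (t+2-i.1) ^ (2*j.1) + (if i.1 = 0 then (0:ℝ) else -1) * x (t+2) ^ (2*j.1)).submatrix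
          (Fin.succAbove 0) Fin.succ)
        = Matrix.of (fun i j : Fin (t+1) =>
            x (t+1-i.1) ^ (2*j.1+2) - x (t+2) ^ (2*j.1+2)) := by
      ext i j
      simp only [Matrix.submatrix_apply, Matrix.of_apply, Fin.succAbove_zero,
        Function.comp_apply]
      have hs : ((Fin.succ i : Fin (t+2)) : ℕ) = i.1 + 1 := rfl
      have hj : ((j.succ : Fin (t+2)) : ℕ) = j.1 + 1 := rfl
      rw [hs, hj, if_neg (by omega), show t+2-(i.1+1) = t+1-i.1 by omega]
      ring_nf
    rw [hsub]
    simp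
  · intro i _ hi
    have hent : (Matrix.of fun i j : Fin (t+2) =>
        x (t+2-i.1) ^ (2*j.1) + (if i.1 = 0 then (0:ℝ) else -1) * x (t+2) ^ (2*j.1)) i 0 = 0 := by
      have hi0 : ¬ (i.1 = 0) := fun h => hi (Fin.ext h)
      simp only [Matrix.of_apply, Fin.val_zero, Nat.mul_zero, pow_zero, hi0, if_false]
      ring
    rw [hent]
    ring
  · intro h
    exact absurd (Finset.mem_univ 0) h

lemma odd_alg (t : ℕ) (x : ℕ → ℝ) :
    (Matrix.of fun i j : Fin (t+1) =>
      (x (t+1-i.1) ^ (2*j.1+2) - x (t+2-i.1) ^ (2*j.1+2)) / ((2*j.1 : ℝ)+2)).det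
    = (∏ j : Fin (t+1), ((2*j.1 : ℝ)+2)⁻¹) *
      (Matrix.of fun i j : Fin (t+2) => x (t+2-i.1) ^ (2*j.1)).det := by
  have hcol : (Matrix.of fun i j : Fin (t+1) =>
      (x (t+1-i.1) ^ (2*j.1+2) - x (t+2-i.1) ^ (2*j.1+2)) / ((2*j.1 : ℝ)+2))
      = Matrix.of fun i j : Fin (t+1) => ((2*j.1 : ℝ)+2)⁻¹ *
        (x (t+1-i.1) ^ (2*j.1+2) - x (t+2-i.1) ^ (2*j.1+2)) := by
    ext i j; simp [div_eq_inv_mul]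
  rw [hcol]
  refine (Matrix.det_mul_row (fun j : Fin (t+1) => ((2*j.1 : ℝ)+2)⁻¹) (Matrix.of fun i j : Fin (t+1) =>
    x (t+1-i.1) ^ (2*j.1+2) - x (t+2-i.1) ^ (2*j.1+2))).trans ?_
  congr 1
  rw [odd_alg2]
  exact (odd_alg1 t x).symm

def Dm (s : ℕ) (x : ℕ → ℝ) : ℝ :=
  (Matrix.of fun i j : Fin ((s+1)/2) =>
    x ((s+1)/2 - i.1) ^ (2*j.1 + (if s % 2 = 0 then 1 else 0))).det

def cfac (s : ℕ) : ℝ := ∏ j ∈ Finset.Icc 1 s, ((dfac (j-1) : ℝ))⁻¹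

lemma key_int (n : ℕ) (x : ℕ → ℝ)
    (hnn : ∀ l, 1 ≤ l → l ≤ (n+3)/2 → 0 ≤ x l)
    (hmono : ∀ l, 1 ≤ l → l+1 ≤ (n+3)/2 → x (l+1) ≤ x l) :
    (∫ y : Fin ((n+2)/2) → ℝ, (IBox n x).indicator (fun y => Dm (n+1) (extRow n y)) y)
    = (dfac (n+1) : ℝ)⁻¹ * Dm (n+2) x := by
  have hab : ∀ k, lowB n x k ≤ upB n x k := by
    intro k
    have hk := k.2
    unfold lowB upB
    split_ifs with h
    · exact hmono (k.1+1) (by omega) (by omega)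
    · exact hnn (k.1+1) (by omega) (by omega)
  have hD : ∀ y : Fin ((n+2)/2) → ℝ, Dm (n+1) (extRow n y)
      = (Matrix.of fun i j : Fin ((n+2)/2) =>
          y (Fin.revPerm i) ^ (2*j.1 + (if (n+1) % 2 = 0 then 1 else 0))).det := by
    intro y
    have harg : ∀ i : Fin ((n+2)/2), extRow n y ((n+2)/2 - i.1) = y (Fin.revPerm i) := by
      intro i
      unfold extRow
      rw [dif_pos (show 1 ≤ (n+2)/2 - i.1 ∧ (n+2)/2 - i.1 ≤ (n+2)/2 from by
        have := i.2; omega)]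
      congr 1
    unfold Dm
    have hs : ((n+1)+1)/2 = (n+2)/2 := by omega
    simp only [hs]
    congr 1
    ext i j
    simp only [Matrix.of_apply, harg]
  rw [show IBox n x = Set.univ.pi (fun k => Set.Icc (lowB n x k) (upB n x k)) from rfl]
  simp_rw [hD]
  rw [int_det _ (lowB n x) (upB n x) hab _ Fin.revPerm]
  rcases Nat.even_or_odd' n with ⟨t, ht | ht⟩
  · subst ht
    have hs2 : (2*t+2)/2 = t+1 := by omega
    have hs3 : (2*t+3)/2 = t+1 := by omega
    have hm1 : ¬ ((2*t+1) % 2 = 0) := by omega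
    have hm2 : (2*t+2) % 2 = 0 := by omega
    rw [← Matrix.det_submatrix_equiv_self (finCongr hs2.symm)]
    have hM : ((Matrix.of fun i j : Fin ((2*t+2)/2) =>
        (upB (2*t) x (Fin.revPerm i) ^ ((2*j.1 + (if (2*t+1) % 2 = 0 then 1 else 0)) + 1)
          - lowB (2*t) x (Fin.revPerm i) ^ ((2*j.1 + (if (2*t+1) % 2 = 0 then 1 else 0)) + 1))
          / (((2*j.1 + (if (2*t+1) % 2 = 0 then 1 else 0)) : ℕ) + 1 : ℝ)).submatrix
            (finCongr hs2.symm) (finCongr hs2.symm))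
        = Matrix.of fun i j : Fin (t+1) =>
          (x (t+1-i.1) ^ (2*j.1+1) - (if 1 ≤ i.1 then x (t+2-i.1) else 0) ^ (2*j.1+1))
            / ((2*j.1 : ℝ)+1) := by
      ext i j
      simp only [Matrix.submatrix_apply, Matrix.of_apply, finCongr_apply, Fin.coe_cast,
        Fin.revPerm_apply, Fin.val_rev, if_neg hm1]
      unfold upB lowB
      simp only [Fin.val_rev, Fin.coe_cast]
      have hi := i.2
      have e1 : (2*t+2)/2 - (i.1+1) + 1 = t+1-i.1 := by omega
      have e3 : ((2*t+2)/2 - (i.1+1) + 2 ≤ (2*t+3)/2) ↔ (1 ≤ i.1) := by omega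
      simp only [e3]
      have e2 : (2*t+2)/2 - (i.1+1) + 2 = t+2-i.1 := by omega
      rw [e1, e2]
      simp only [Nat.add_zero]
      push_cast
      ring_nf
    rw [hM, even_alg]
    congr 1
    · rw [dfac_odd t, Nat.cast_prod, ← Finset.prod_inv_distrib]
      refine Finset.prod_congr rfl fun j _ => ?_
      push_cast
      ring_nf
    · unfold Dm
      rw [← Matrix.det_submatrix_equiv_self (finCongr (show (2*t+2+1)/2 = t+1 from hs3).symm)]
      congr 1
      ext i j
      simp only [Matrix.submatrix_apply, Matrix.of_apply, finCongr_apply, Fin.coe_cast,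
        if_pos hm2]
      rw [show (2*t+2+1)/2 - i.1 = t+1-i.1 from by omega]
  · subst ht
    have hs2 : (2*t+1+2)/2 = t+1 := by omega
    have hs4 : (2*t+1+3)/2 = t+2 := by omega
    have hm1 : (2*t+1+1) % 2 = 0 := by omega
    have hm2 : ¬ ((2*t+1+2) % 2 = 0) := by omega
    rw [← Matrix.det_submatrix_equiv_self (finCongr hs2.symm)]
    have hM : ((Matrix.of fun i j : Fin ((2*t+1+2)/2) =>
        (upB (2*t+1) x (Fin.revPerm i) ^ ((2*j.1 + (if (2*t+1+1) % 2 = 0 then 1 else 0)) + 1)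
          - lowB (2*t+1) x (Fin.revPerm i) ^ ((2*j.1 + (if (2*t+1+1) % 2 = 0 then 1 else 0)) + 1))
          / (((2*j.1 + (if (2*t+1+1) % 2 = 0 then 1 else 0)) : ℕ) + 1 : ℝ)).submatrix
            (finCongr hs2.symm) (finCongr hs2.symm))
        = Matrix.of fun i j : Fin (t+1) =>
          (x (t+1-i.1) ^ (2*j.1+2) - x (t+2-i.1) ^ (2*j.1+2))
            / ((2*j.1 : ℝ)+2) := by
      ext i j
      simp only [Matrix.submatrix_apply, Matrix.of_apply, finCongr_apply, Fin.coe_cast,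
        Fin.revPerm_apply, Fin.val_rev, if_pos hm1]
      unfold upB lowB
      simp only [Fin.val_rev, Fin.coe_cast]
      have hi := i.2
      have e1 : (2*t+1+2)/2 - (i.1+1) + 1 = t+1-i.1 := by omega
      have e3 : ((2*t+1+2)/2 - (i.1+1) + 2 ≤ (2*t+1+3)/2) ↔ True := by
        simp only [iff_true]; omega
      simp only [e3, if_true]
      have e2 : (2*t+1+2)/2 - (i.1+1) + 2 = t+2-i.1 := by omega
      rw [e1, e2, show 2*j.1+1+1 = 2*j.1+2 from rfl]
      push_cast
      ring_nf
    rw [hM, odd_alg]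
    congr 1
    · rw [show 2*t+1+1 = 2*t+2 from rfl, dfac_even t, Nat.cast_prod,
        ← Finset.prod_inv_distrib]
      refine Finset.prod_congr rfl fun j _ => ?_
      push_cast
      ring_nf
    · unfold Dm
      rw [← Matrix.det_submatrix_equiv_self (finCongr (show (2*t+1+2+1)/2 = t+2 from by omega).symm)]
      congr 1
      ext i j
      simp only [Matrix.submatrix_apply, Matrix.of_apply, finCongr_apply, Fin.coe_cast,
        if_neg hm2]
      simp only [Nat.add_zero]
      rw [show (2*t+1+2+1)/2 - i.1 = t+2-i.1 from by omega]

lemma cfac_nonneg (s : ℕ) : 0 ≤ cfac s :=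
  Finset.prod_nonneg fun j _ => inv_nonneg.2 (Nat.cast_nonneg _)

lemma cfac_succ (n : ℕ) : cfac (n+2) = cfac (n+1) * ((dfac (n+1) : ℝ))⁻¹ := by
  unfold cfac
  rw [Finset.prod_Icc_succ_top (by omega : 1 ≤ n+2)]
  norm_num

lemma Dm_one (x : ℕ → ℝ) : Dm 1 x = 1 := by
  unfold Dm
  rw [show (1+1)/2 = 1 from rfl]
  rw [Matrix.det_fin_one]
  norm_num

instance : IsEmpty (GTIdx 0) := ⟨fun q => q.1.elim0⟩

lemma HPS_one (x : ℕ → ℝ) (hnn : ∀ l, 1 ≤ l → l ≤ 1 → 0 ≤ x l) :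
    HalfPatternSet 1 x = Set.univ := by
  have hr : rowLen 1 = 1 := rfl
  refine Set.eq_univ_iff_forall.2 fun f => ⟨?_, ?_, ?_, ?_⟩
  · intro r l h1 h2 h3 h4
    have hrr : r = 1 := by omega
    subst hrr
    rw [hr] at h4
    unfold hpEnt
    rw [if_pos rfl, if_pos ⟨h3, h4⟩]
    exact hnn l h3 h4
  · intro r l h1 h2 h3 h4
    have hrr : r = 1 := by omega
    subst hrr
    rw [hr] at h4
    omega
  · intro r l h1 h2
    omega
  · intro r l h1 h2
    omega

lemma volume_univ_gtidx0 : (volume : Measure (GTIdx 0 → ℝ)) Set.univ = 1 := by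
  rw [volume_pi, ← Set.pi_univ Set.univ, Measure.pi_pi]
  rw [Finset.univ_eq_empty, Finset.prod_empty]

theorem main_ind : ∀ n : ℕ, ∀ x : ℕ → ℝ,
    (∀ l, 1 ≤ l → l ≤ (n+2)/2 → 0 ≤ x l) →
    (∀ l, 1 ≤ l → l + 1 ≤ (n+2)/2 → x (l+1) ≤ x l) →
    volume (HalfPatternSet (n+1) x) = ENNReal.ofReal (cfac (n+1) * Dm (n+1) x)
      ∧ 0 ≤ Dm (n+1) x := by
  intro n
  induction n with
  | zero =>
    intro x hnn hmono
    constructor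
    · rw [HPS_one x hnn, volume_univ_gtidx0, Dm_one]
      have hc : cfac 1 = 1 := by
        unfold cfac
        simp [dfac]
      rw [hc]
      norm_num
    · rw [Dm_one]
      norm_num
  | succ n ih =>
    intro x hnn hmono
    -- extRow of a box point is admissible
    have hext : ∀ y ∈ IBox n x,
        (∀ l, 1 ≤ l → l ≤ (n+2)/2 → 0 ≤ extRow n y l) ∧
        (∀ l, 1 ≤ l → l + 1 ≤ (n+2)/2 → extRow n y (l+1) ≤ extRow n y l) := by
      intro y hy
      rw [mem_IBox] at hy
      constructor
      · intro l h1 h2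
        unfold extRow
        rw [dif_pos ⟨h1, h2⟩]
        set k : Fin ((n+2)/2) := ⟨l-1, by omega⟩ with hkdef
        have hk1 : k.1 = l-1 := rfl
        refine le_trans ?_ (hy k).1
        unfold lowB
        rw [hk1]
        split_ifs with h
        · exact hnn (l-1+2) (by omega) (by omega)
        · exact le_refl 0
      · intro l h1 h2
        unfold extRow
        rw [dif_pos (show 1 ≤ l+1 ∧ l+1 ≤ (n+2)/2 from ⟨by omega, h2⟩),
          dif_pos (show 1 ≤ l ∧ l ≤ (n+2)/2 from ⟨h1, by omega⟩)]
        set k2 : Fin ((n+2)/2) := ⟨l+1-1, by omega⟩ with hk2def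
        set k : Fin ((n+2)/2) := ⟨l-1, by omega⟩ with hkdef
        have hk21 : k2.1 = l+1-1 := rfl
        have hk1 : k.1 = l-1 := rfl
        have hu := (hy k2).2
        have hl2 := (hy k).1
        unfold upB at hu
        unfold lowB at hl2
        rw [hk21] at hu
        rw [hk1] at hl2
        rw [if_pos (show l-1+2 ≤ (n+3)/2 by omega)] at hl2
        have e1 : l+1-1+1 = l+1 := by omega
        have e2 : l-1+2 = l+1 := by omega
        rw [e1] at hu
        rw [e2] at hl2
        exact le_trans hu hl2
    have hnonnegD : ∀ y ∈ IBox n x, 0 ≤ Dm (n+1) (extRow n y) :=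
      fun y hy => (ih (extRow n y) (hext y hy).1 (hext y hy).2).2
    have hIBoxmeas : MeasurableSet (IBox n x) :=
      MeasurableSet.univ_pi fun k => measurableSet_Icc
    have hIcomp : IsCompact (IBox n x) := isCompact_univ_pi fun k => isCompact_Icc
    have hDcont : Continuous fun y : Fin ((n+2)/2) → ℝ => Dm (n+1) (extRow n y) := by
      unfold Dm
      apply Continuous.matrix_det
      apply continuous_matrix
      intro i j
      apply Continuous.pow
      unfold extRow
      by_cases hc : 1 ≤ ((n+1)+1)/2 - i.1 ∧ ((n+1)+1)/2 - i.1 ≤ (n+2)/2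
      · simp only [dif_pos hc]
        exact continuous_apply _
      · simp only [dif_neg hc]
        exact continuous_const
    have hint0 : 0 ≤ ∫ y : Fin ((n+2)/2) → ℝ,
        (IBox n x).indicator (fun y => Dm (n+1) (extRow n y)) y := by
      refine MeasureTheory.integral_nonneg fun y => ?_
      by_cases hy : y ∈ IBox n x
      · rw [Set.indicator_of_mem hy]; exact hnonnegD y hy
      · rw [Set.indicator_of_notMem hy]; simp
    have hk := key_int n x hnn hmono
    have hdp : (0:ℝ) < (dfac (n+1) : ℝ) := by exact_mod_cast dfac_pos _
    have hDnn : 0 ≤ Dm (n+2) x := by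
      rw [hk] at hint0
      have h2 : 0 ≤ (dfac (n+1) : ℝ) * ((dfac (n+1) : ℝ)⁻¹ * Dm (n+2) x) :=
        mul_nonneg hdp.le hint0
      rwa [← mul_assoc, mul_inv_cancel₀ (ne_of_gt hdp), one_mul] at h2
    refine ⟨?_, hDnn⟩
    rw [volume_rec n x hnn hmono]
    have hind : ∀ y, (IBox n x).indicator
        (fun y => volume (HalfPatternSet (n+1) (extRow n y))) y
        = ENNReal.ofReal ((IBox n x).indicator
            (fun y => cfac (n+1) * Dm (n+1) (extRow n y)) y) := by
      intro y
      by_cases hy : y ∈ IBox n x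
      · rw [Set.indicator_of_mem hy, Set.indicator_of_mem hy,
          ((ih (extRow n y) (hext y hy).1 (hext y hy).2).1)]
      · rw [Set.indicator_of_notMem hy, Set.indicator_of_notMem hy, ENNReal.ofReal_zero]
    simp_rw [hind]
    have hInt : Integrable ((IBox n x).indicator
        (fun y : Fin ((n+2)/2) → ℝ => cfac (n+1) * Dm (n+1) (extRow n y))) := by
      refine MeasureTheory.IntegrableOn.integrable_indicator ?_ hIBoxmeas
      exact ((continuous_const.mul hDcont).continuousOn).integrableOn_compact hIcomp
    have hae : 0 ≤ᵐ[volume] (IBox n x).indicator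
        (fun y : Fin ((n+2)/2) → ℝ => cfac (n+1) * Dm (n+1) (extRow n y)) := by
      refine Filter.Eventually.of_forall fun y => ?_
      by_cases hy : y ∈ IBox n x
      · rw [Set.indicator_of_mem hy]
        exact mul_nonneg (cfac_nonneg _) (hnonnegD y hy)
      · rw [Set.indicator_of_notMem hy]; simp
    rw [← MeasureTheory.ofReal_integral_eq_lintegral_ofReal hInt hae]
    have hmul : (IBox n x).indicator
        (fun y : Fin ((n+2)/2) → ℝ => cfac (n+1) * Dm (n+1) (extRow n y))
        = fun y => cfac (n+1) * (IBox n x).indicator (fun y => Dm (n+1) (extRow n y)) y := by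
      funext y
      by_cases hy : y ∈ IBox n x
      · rw [Set.indicator_of_mem hy, Set.indicator_of_mem hy]
      · rw [Set.indicator_of_notMem hy, Set.indicator_of_notMem hy, mul_zero]
    rw [hmul, MeasureTheory.integral_const_mul, hk]
    rw [cfac_succ]
    ring_nf


/-- Lemma 4.9: the Lebesgue volume of the continuous half patterns of length `s` with
nonnegative entries and top row `x₁ ≥ ⋯ ≥ x_m ≥ 0` (`m = ⌊(s+1)/2⌋`) equals
`(∏_{j=1}^s 1/(j−1)‼) · det(x_{m+1−i}^{2(j−1)+𝟙(s even)})_{i,j=1}^m`. -/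
theorem volume_half_pattern_det (s : ℕ) (hs : 0 < s) (x : ℕ → ℝ)
    (hnn : ∀ l, 1 ≤ l → l ≤ (s+1)/2 → 0 ≤ x l)
    (hmono : ∀ l, 1 ≤ l → l + 1 ≤ (s+1)/2 → x (l+1) ≤ x l) :
    volume (HalfPatternSet s x) =
      ENNReal.ofReal ((∏ j ∈ Finset.Icc 1 s, ((dfac (j-1) : ℝ))⁻¹) *
        (Matrix.of fun i j : Fin ((s+1)/2) =>
          x ((s+1)/2 - i.1) ^ (2 * j.1 + (if s % 2 = 0 then 1 else 0))).det) := by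
  obtain ⟨n, rfl⟩ : ∃ n, s = n+1 := ⟨s-1, by omega⟩
  exact (main_ind n x hnn hmono).1

end
end
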